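/- arXiv:2012.08109 — 5 statements merged into one kernel-verified Lean document; each statement's English description precedes it below -/
import Mathlib

section
/- Let n ≥ 2 be an integer and θ ∈ (0,1). Then every cubature formula ν of strength 3 on S^{n-1} satisfies ‖ν‖_θ ≥ (2n)^{1−θ}. -/
open MeasureTheory Metric
open scoped ENNReal

noncomputable section

abbrev Sph (n : ℕ) : Type := Metric.sphere (0 : EuclideanSpace ℝ (Fin n)) 1

def sphMap {n : ℕ} (U : EuclideanSpace ℝ (Fin n) ≃ₗᵢ[ℝ] EuclideanSpace ℝ (Fin n)) :
    Sph n → Sph n := fun x =>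
  ⟨U x, by
    have hx : ‖(x : EuclideanSpace ℝ (Fin n))‖ = 1 := mem_sphere_zero_iff_norm.mp x.2
    simpa [mem_sphere_zero_iff_norm] using hx⟩

lemma sphMap_continuous {n : ℕ}
    (U : EuclideanSpace ℝ (Fin n) ≃ₗᵢ[ℝ] EuclideanSpace ℝ (Fin n)) :
    Continuous (sphMap U) :=
  (U.continuous.comp continuous_subtype_val).subtype_mk _

def antipode {n : ℕ} : Sph n → Sph n := fun x =>
  ⟨-(x : EuclideanSpace ℝ (Fin n)), by
    have hx : ‖(x : EuclideanSpace ℝ (Fin n))‖ = 1 := mem_sphere_zero_iff_norm.mp x.2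
    simpa [mem_sphere_zero_iff_norm] using hx⟩

/-- `σ` is invariant under all orthogonal transformations of `ℝⁿ`. -/
def IsRotationInvariant {n : ℕ} (σ : Measure (Sph n)) : Prop :=
  ∀ U : EuclideanSpace ℝ (Fin n) ≃ₗᵢ[ℝ] EuclideanSpace ℝ (Fin n),
    Measure.map (sphMap U) σ = σ

/-- Evaluation of a polynomial on `ℝⁿ` at a point of the sphere. -/
def polyEval {n : ℕ} (p : MvPolynomial (Fin n) ℝ) (x : Sph n) : ℝ :=
  MvPolynomial.eval (fun i => (x : EuclideanSpace ℝ (Fin n)) i) p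

/-- `ν` is finitely supported. -/
def IsFinSupported {n : ℕ} (ν : Measure (Sph n)) : Prop :=
  ∃ s : Finset (Sph n), ν ((↑s : Set (Sph n))ᶜ) = 0

/-- `ν` is a cubature formula of strength `t` w.r.t. the reference measure `σ`. -/
def IsCubature {n : ℕ} (t : ℕ) (σ ν : Measure (Sph n)) : Prop :=
  IsProbabilityMeasure ν ∧ IsFinSupported ν ∧
    ∀ p : MvPolynomial (Fin n) ℝ, p.totalDegree ≤ t →
      ∫ x, polyEval p x ∂ν = ∫ x, polyEval p x ∂σ

/-- `‖ν‖_θ = ∑ νᵢ^θ`, the sum of the `θ`-th powers of the point masses of `ν`. -/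
def thetaNorm {n : ℕ} (ν : Measure (Sph n)) (θ : ℝ) : ℝ :=
  ∑' u : Sph n, (ν {u}).toReal ^ θ

/- ######## auxiliary material ######## -/

open scoped RealInnerProductSpace

section Aux

variable {n : ℕ}

local notation "E" => EuclideanSpace ℝ (Fin n)

lemma aux_integrable {μ : Measure (Sph n)} [IsFiniteMeasure μ] {f : Sph n → ℝ}
    (hf : Continuous f) : Integrable f μ :=
  hf.integrable_of_hasCompactSupport (HasCompactSupport.of_compactSpace f)

lemma aux_cont_inner (a : E) : Continuous fun x : Sph n => ⟪a, (x : E)⟫ :=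
  continuous_const.inner continuous_subtype_val

lemma integral_sphMap {σ : Measure (Sph n)} (hσ : IsRotationInvariant σ)
    (U : EuclideanSpace ℝ (Fin n) ≃ₗᵢ[ℝ] EuclideanSpace ℝ (Fin n))
    (g : Sph n → ℝ) (hg : Continuous g) :
    ∫ x, g (sphMap U x) ∂σ = ∫ x, g x ∂σ := by
  conv_rhs => rw [← hσ U]
  rw [integral_map (sphMap_continuous U).aemeasurable hg.aestronglyMeasurable]

lemma integral_cube {σ : Measure (Sph n)} (hσ : IsRotationInvariant σ) (a : E) :
    ∫ x : Sph n, ⟪a, (x : E)⟫ ^ 3 ∂σ = 0 := by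
  have hc : Continuous fun x : Sph n => ⟪a, (x : E)⟫ ^ 3 := (aux_cont_inner a).pow 3
  have h := integral_sphMap hσ (LinearIsometryEquiv.neg ℝ) _ hc
  have h2 : ∀ x : Sph n,
      ⟪a, ((sphMap (LinearIsometryEquiv.neg ℝ) x : Sph n) : E)⟫ ^ 3 = -(⟪a, (x : E)⟫ ^ 3) := by
    intro x
    have : ((sphMap (LinearIsometryEquiv.neg ℝ) x : Sph n) : E) = -(x : E) := rfl
    rw [this, inner_neg_right]
    ring
  rw [integral_congr_ae (Filter.Eventually.of_forall h2), integral_neg] at h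
  linarith

lemma integral_sq_eq {σ : Measure (Sph n)} (hσ : IsRotationInvariant σ) {a b : E}
    (ha : ‖a‖ = 1) (hb : ‖b‖ = 1) :
    ∫ x : Sph n, ⟪a, (x : E)⟫ ^ 2 ∂σ = ∫ x : Sph n, ⟪b, (x : E)⟫ ^ 2 ∂σ := by
  set R : E ≃ₗᵢ[ℝ] E := Submodule.reflection (ℝ ∙ (a - b))ᗮ with hR
  have hc : Continuous fun x : Sph n => ⟪a, (x : E)⟫ ^ 2 := (aux_cont_inner a).pow 2
  have h := integral_sphMap hσ R _ hc
  have key : ∀ x : Sph n, ⟪a, ((sphMap R x : Sph n) : E)⟫ ^ 2 = ⟪b, (x : E)⟫ ^ 2 := by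
    intro x
    have hcoe : ((sphMap R x : Sph n) : E) = R (x : E) := rfl
    have h1 : ⟪a, R (x : E)⟫ = ⟪R (R a), R (x : E)⟫ := by rw [Submodule.reflection_reflection]
    have h2 : ⟪R (R a), R (x : E)⟫ = ⟪R a, (x : E)⟫ := R.inner_map_map _ _
    have h3 : R a = b := Submodule.reflection_sub (ha.trans hb.symm)
    rw [hcoe, h1, h2, h3]
  rw [integral_congr_ae (Filter.Eventually.of_forall key)] at h
  exact h.symm

lemma sum_sq_coords (x : Sph n) : ∑ i, ((x : E) i) ^ 2 = 1 := by
  have hx : ‖(x : E)‖ = 1 := mem_sphere_zero_iff_norm.mp x.2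
  have h1 : ⟪(x : E), (x : E)⟫ = ‖(x : E)‖ ^ 2 := real_inner_self_eq_norm_sq _
  have h2 : ⟪(x : E), (x : E)⟫ = ∑ i, ((x : E) i) * ((x : E) i) := by
    simp only [PiLp.inner_apply, RCLike.inner_apply, conj_trivial]
  rw [h2] at h1
  rw [hx] at h1
  simpa [pow_two] using h1

lemma integral_sq {σ : Measure (Sph n)} [IsProbabilityMeasure σ]
    (hσ : IsRotationInvariant σ) {a : E} (ha : ‖a‖ = 1) :
    ∫ x : Sph n, ⟪a, (x : E)⟫ ^ 2 ∂σ = 1 / n := by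
  set I := ∫ x : Sph n, ⟪a, (x : E)⟫ ^ 2 ∂σ with hI
  have heach : ∀ i : Fin n, ∫ x : Sph n, ((x : E) i) ^ 2 ∂σ = I := by
    intro i
    have hb : ‖(EuclideanSpace.single i (1 : ℝ) : E)‖ = 1 := by
      simp [EuclideanSpace.norm_single]
    have h := integral_sq_eq hσ hb ha
    have h2 : ∀ x : Sph n, ⟪(EuclideanSpace.single i (1 : ℝ) : E), (x : E)⟫ ^ 2
        = ((x : E) i) ^ 2 := by
      intro x; rw [EuclideanSpace.inner_single_left]; simp
    rw [integral_congr_ae (Filter.Eventually.of_forall h2)] at h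
    exact h
  have hsum : ∑ i : Fin n, ∫ x : Sph n, ((x : E) i) ^ 2 ∂σ = 1 := by
    have hint : ∀ i ∈ Finset.univ, Integrable (fun x : Sph n => ((x : E) i) ^ 2) σ := by
      intro i _
      have hci : Continuous fun x : Sph n => ((x : E) i) ^ 2 :=
        ((continuous_apply i).comp ((PiLp.continuous_ofLp 2 _).comp continuous_subtype_val)).pow 2
      exact aux_integrable hci
    rw [← integral_finset_sum Finset.univ hint]
    rw [integral_congr_ae (Filter.Eventually.of_forall fun x => sum_sq_coords x)]
    simp
  rw [Finset.sum_congr rfl (fun i _ => heach i), Finset.sum_const, Finset.card_univ,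
    Fintype.card_fin, nsmul_eq_mul] at hsum
  have hn0 : (n : ℝ) ≠ 0 := by
    by_contra h
    rw [h, zero_mul] at hsum
    norm_num at hsum
  field_simp at hsum ⊢
  linarith

lemma weight_le (hn : 2 ≤ n) (σ : Measure (Sph n)) [IsProbabilityMeasure σ]
    (hσ : IsRotationInvariant σ) (ν : Measure (Sph n)) (hν : IsCubature 3 σ ν)
    (ξ : Sph n) : (ν {ξ}).toReal ≤ 1 / (2 * n) := by
  obtain ⟨hprob, hfin, hcub⟩ := hν
  set a : E := (ξ : E) with haa
  have ha : ‖a‖ = 1 := mem_sphere_zero_iff_norm.mp ξ.2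
  set L : MvPolynomial (Fin n) ℝ := ∑ i, MvPolynomial.C (a i) * MvPolynomial.X i with hL
  set P : MvPolynomial (Fin n) ℝ := MvPolynomial.C (1 / 2 : ℝ) * (L ^ 2 + L ^ 3) with hP
  have hLdeg : L.totalDegree ≤ 1 := by
    refine MvPolynomial.totalDegree_finsetSum_le fun i _ => ?_
    refine (MvPolynomial.totalDegree_mul _ _).trans ?_
    simp [MvPolynomial.totalDegree_X]
  have hdeg : P.totalDegree ≤ 3 := by
    refine (MvPolynomial.totalDegree_mul _ _).trans ?_
    have h2 : (L ^ 2).totalDegree ≤ 2 :=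
      (MvPolynomial.totalDegree_pow _ _).trans (by omega)
    have h3 : (L ^ 3).totalDegree ≤ 3 :=
      (MvPolynomial.totalDegree_pow _ _).trans (by omega)
    have := (MvPolynomial.totalDegree_add (L ^ 2) (L ^ 3)).trans (max_le (h2.trans (by omega)) h3)
    simpa [MvPolynomial.totalDegree_C] using this
  set g : Sph n → ℝ := fun x => (⟪a, (x : E)⟫ ^ 2 + ⟪a, (x : E)⟫ ^ 3) / 2 with hg
  have hval : ∀ x : Sph n, polyEval P x = g x := by
    intro x
    have hLx : MvPolynomial.eval (fun i => (x : E) i) L = ⟪a, (x : E)⟫ := by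
      simp [hL, PiLp.inner_apply, RCLike.inner_apply, mul_comm]
    simp only [polyEval, hP, map_mul, map_add, map_pow, MvPolynomial.eval_C, hLx, hg]
    ring
  have hgcont : Continuous g :=
    (((aux_cont_inner a).pow 2).add ((aux_cont_inner a).pow 3)).div_const 2
  have hInt_sq : Integrable (fun x : Sph n => ⟪a, (x : E)⟫ ^ 2) σ :=
    aux_integrable ((aux_cont_inner a).pow 2)
  have hInt_cube : Integrable (fun x : Sph n => ⟪a, (x : E)⟫ ^ 3) σ :=
    aux_integrable ((aux_cont_inner a).pow 3)
  have hσint : ∫ x, g x ∂σ = 1 / (2 * n) := by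
    rw [hg]
    simp only [div_eq_mul_inv]
    rw [integral_mul_const, integral_add hInt_sq hInt_cube, integral_sq hσ ha,
      integral_cube hσ a]
    have hn0 : (n : ℝ) ≠ 0 := by positivity
    field_simp
    ring
  have hνint : ∫ x, g x ∂ν = 1 / (2 * n) := by
    rw [← integral_congr_ae (Filter.Eventually.of_forall hval),
      hcub P hdeg, integral_congr_ae (Filter.Eventually.of_forall hval), hσint]
  have hg0 : ∀ x : Sph n, 0 ≤ g x := by
    intro x
    have habs : |⟪a, (x : E)⟫| ≤ 1 := by
      have := abs_real_inner_le_norm a (x : E)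
      have hx : ‖(x : E)‖ = 1 := mem_sphere_zero_iff_norm.mp x.2
      rw [ha, hx] at this; simpa using this
    have h1 : -1 ≤ ⟪a, (x : E)⟫ := neg_le_of_abs_le habs
    have := sq_nonneg ⟪a, (x : E)⟫
    rw [hg]
    nlinarith
  have hgξ : g ξ = 1 := by
    have : ⟪a, a⟫ = 1 := by
      rw [real_inner_self_eq_norm_sq, ha]; norm_num
    simp only [hg, ← haa, this]; norm_num
  have hle : (ν {ξ}).toReal ≤ ∫ x, g x ∂ν := by
    have h1 : ∫ x in ({ξ} : Set (Sph n)), g x ∂ν = (ν {ξ}).toReal • g ξ :=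
      integral_singleton g ξ
    have h2 : ∫ x in ({ξ} : Set (Sph n)), g x ∂ν ≤ ∫ x, g x ∂ν :=
      setIntegral_le_integral (aux_integrable hgcont) (Filter.Eventually.of_forall hg0)
    rw [h1, hgξ, smul_eq_mul, mul_one] at h2
    exact h2
  rw [hνint] at hle
  exact hle

end Aux

theorem stmt5 (n : ℕ) (hn : 2 ≤ n)
    (σ : Measure (Sph n)) [IsProbabilityMeasure σ] (hσ : IsRotationInvariant σ)
    (ν : Measure (Sph n)) (hν : IsCubature 3 σ ν)
    (θ : ℝ) (hθ : θ ∈ Set.Ioo (0 : ℝ) 1) :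
    ((2 * n : ℕ) : ℝ) ^ (1 - θ) ≤ thetaNorm ν θ := by
  obtain ⟨hθ0, hθ1⟩ := hθ
  obtain ⟨hprob, ⟨s, hs⟩, hcub⟩ := hν
  have hνcub : IsCubature 3 σ ν := ⟨hprob, ⟨s, hs⟩, hcub⟩
  set w : Sph n → ℝ := fun u => (ν {u}).toReal with hw
  have hwnn : ∀ u, 0 ≤ w u := fun u => ENNReal.toReal_nonneg
  have hwle : ∀ u, w u ≤ 1 / (2 * n) := fun u => weight_le hn σ hσ ν hνcub u
  have hzero : ∀ u : Sph n, u ∉ s → w u = 0 := by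
    intro u hu
    have : ν {u} ≤ ν ((↑s : Set (Sph n))ᶜ) := measure_mono (by simpa using hu)
    rw [hs] at this
    simp [hw, le_antisymm this zero_le]
  have hzero' : ∀ u : Sph n, u ∉ s → w u ^ θ = 0 := by
    intro u hu
    rw [hzero u hu, Real.zero_rpow (ne_of_gt hθ0)]
  have htn : thetaNorm ν θ = ∑ u ∈ s, w u ^ θ := by
    rw [thetaNorm]
    exact tsum_eq_sum hzero'
  have hνs : ν (↑s : Set (Sph n)) = 1 := by
    have hms : MeasurableSet (↑s : Set (Sph n)) := s.finite_toSet.measurableSet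
    have := measure_add_measure_compl (μ := ν) hms
    rw [hs, add_zero, measure_univ] at this
    exact this
  have hsum1 : ∑ u ∈ s, w u = 1 := by
    have h1 : ν (↑s : Set (Sph n)) = ∑ u ∈ s, ν {u} := by
      have hd : (↑s : Set (Sph n)).PairwiseDisjoint (fun u : Sph n => ({u} : Set (Sph n))) := by
        intro x _ y _ hxy
        simp [Function.onFun, Set.disjoint_singleton_left, hxy]
      have := measure_biUnion_finset (μ := ν) hd (fun u _ => measurableSet_singleton u)
      rw [← this]
      congr 1
      exact (Set.biUnion_of_singleton (↑s : Set (Sph n))).symm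
    have h2 : ∀ u ∈ s, ν {u} ≠ ∞ := fun u _ =>
      (lt_of_le_of_lt (measure_mono (Set.subset_univ _)) (by simp [measure_univ])).ne
    have := congrArg ENNReal.toReal (h1.trans rfl)
    rw [hνs] at h1
    have h3 := congrArg ENNReal.toReal h1.symm
    rw [ENNReal.toReal_sum h2] at h3
    simpa [hw] using h3
  set c : ℝ := (1 / (2 * (n : ℝ))) ^ (θ - 1) with hc
  have hn0 : (0 : ℝ) < 2 * n := by positivity
  have hterm : ∀ u ∈ s, w u * c ≤ w u ^ θ := by
    intro u _
    rcases eq_or_lt_of_le (hwnn u) with h0 | hpos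
    · rw [← h0, Real.zero_rpow (ne_of_gt hθ0), zero_mul]
    · have h1 : w u ^ θ = w u * w u ^ (θ - 1) := by
        have hadd := Real.rpow_add hpos 1 (θ - 1)
        rw [Real.rpow_one] at hadd
        calc w u ^ θ = w u ^ (1 + (θ - 1)) := by rw [show (1 : ℝ) + (θ - 1) = θ by ring]
        _ = w u * w u ^ (θ - 1) := hadd
      have h2 : c ≤ w u ^ (θ - 1) := by
        rw [hc]
        exact Real.rpow_le_rpow_of_nonpos hpos (hwle u) (by linarith)
      rw [h1]
      exact mul_le_mul_of_nonneg_left h2 (hwnn u)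
  have hge : c ≤ ∑ u ∈ s, w u ^ θ := by
    calc c = (∑ u ∈ s, w u) * c := by rw [hsum1, one_mul]
    _ = ∑ u ∈ s, w u * c := by rw [Finset.sum_mul]
    _ ≤ ∑ u ∈ s, w u ^ θ := Finset.sum_le_sum hterm
  have hcval : c = ((2 * n : ℕ) : ℝ) ^ (1 - θ) := by
    have h2n : ((2 * n : ℕ) : ℝ) = 2 * (n : ℝ) := by push_cast; ring
    rw [hc, h2n, one_div, ← Real.rpow_neg_one (2 * (n : ℝ)), ← Real.rpow_mul hn0.le]
    norm_num
  rw [htn, ← hcval]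
  exact hge
end
end

section
/- Let n ≥ 2 and t ≥ 1 be integers and θ ∈ (0,1). Then every cubature formula ν of strength 2t on S^{n-1} satisfies ‖ν‖_θ ≥ (C(n+t-1, n-1) + C(n+t-2, n-1))^{1−θ}, where C(a,b) denotes the binomial coefficient. -/
open MeasureTheory Metric
open scoped ENNReal

noncomputable section

namespace CubAux

open MvPolynomial

variable {n : ℕ}

lemma polyEval_continuous (p : MvPolynomial (Fin n) ℝ) : Continuous (polyEval p) := by
  have h1 : Continuous fun x : Sph n => (fun i => (x : EuclideanSpace ℝ (Fin n)) i) := by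
    refine continuous_pi fun i => ?_
    exact (EuclideanSpace.proj (𝕜 := ℝ) i).continuous.comp continuous_subtype_val
  exact (MvPolynomial.continuous_eval (p := p)).comp h1

lemma cont_integrable {μ : Measure (Sph n)} [IsFiniteMeasure μ] {f : Sph n → ℝ}
    (hf : Continuous f) : Integrable f μ :=
  hf.integrable_of_hasCompactSupport (HasCompactSupport.of_compactSpace f)

lemma exists_sphMap (x y : Sph n) :
    ∃ U : EuclideanSpace ℝ (Fin n) ≃ₗᵢ[ℝ] EuclideanSpace ℝ (Fin n), sphMap U x = y := by
  refine ⟨Submodule.reflection (ℝ ∙ ((x : EuclideanSpace ℝ (Fin n)) - (y : EuclideanSpace ℝ (Fin n))))ᗮ, ?_⟩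
  apply Subtype.ext
  show Submodule.reflection (ℝ ∙ ((x : EuclideanSpace ℝ (Fin n)) - (y : EuclideanSpace ℝ (Fin n))))ᗮ
      (x : EuclideanSpace ℝ (Fin n)) = (y : EuclideanSpace ℝ (Fin n))
  apply Submodule.reflection_sub
  rw [mem_sphere_zero_iff_norm.mp x.2, mem_sphere_zero_iff_norm.mp y.2]

lemma sphMap_preimage_ball (U : EuclideanSpace ℝ (Fin n) ≃ₗᵢ[ℝ] EuclideanSpace ℝ (Fin n))
    {x y : Sph n} (hU : sphMap U x = y) (r : ℝ) :
    sphMap U ⁻¹' Metric.ball y r = Metric.ball x r := by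
  ext z
  simp only [Set.mem_preimage, Metric.mem_ball]
  rw [← hU, Subtype.dist_eq, Subtype.dist_eq]
  show dist (U z) (U x) < r ↔ _
  rw [U.dist_map]

lemma ball_pos (σ : Measure (Sph n)) [IsProbabilityMeasure σ] (hσ : IsRotationInvariant σ)
    (x : Sph n) {r : ℝ} (hr : 0 < r) : 0 < σ (Metric.ball x r) := by
  by_contra h
  have h0 : σ (Metric.ball x r) = 0 := le_antisymm (not_lt.mp h) zero_le
  have hall : ∀ y : Sph n, σ (Metric.ball y r) = 0 := by
    intro y
    obtain ⟨U, hU⟩ := exists_sphMap x y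
    calc σ (Metric.ball y r) = (Measure.map (sphMap U) σ) (Metric.ball y r) := by rw [hσ U]
      _ = σ (sphMap U ⁻¹' Metric.ball y r) :=
        Measure.map_apply (sphMap_continuous U).measurable measurableSet_ball
      _ = σ (Metric.ball x r) := by rw [sphMap_preimage_ball U hU]
      _ = 0 := h0
  obtain ⟨s, hs⟩ := isCompact_univ.elim_finite_subcover (fun y : Sph n => Metric.ball y r)
    (fun y => isOpen_ball) (fun z _ => Set.mem_iUnion.mpr ⟨z, mem_ball_self hr⟩)
  have hz : σ Set.univ = 0 :=
    measure_mono_null hs ((measure_biUnion_null_iff s.countable_toSet).mpr fun y _ => hall y)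
  simp [measure_univ] at hz

lemma integral_pos (σ : Measure (Sph n)) [IsProbabilityMeasure σ] (hσ : IsRotationInvariant σ)
    {f : Sph n → ℝ} (hf : Continuous f) (hnn : ∀ x, 0 ≤ f x) {x₀ : Sph n} (hx₀ : f x₀ ≠ 0) :
    0 < ∫ x, f x ∂σ := by
  rw [integral_pos_iff_support_of_nonneg_ae (Filter.Eventually.of_forall hnn)
    (cont_integrable hf)]
  have hop : IsOpen (Function.support f) := hf.isOpen_support
  obtain ⟨r, hr, hball⟩ := Metric.isOpen_iff.mp hop x₀ hx₀
  exact lt_of_lt_of_le (ball_pos σ hσ x₀ hr) (measure_mono hball)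

lemma eval_smul_isHomog {F : MvPolynomial (Fin n) ℝ} {d : ℕ}
    (hF : F.IsHomogeneous d) (c : ℝ) (x : Fin n → ℝ) :
    MvPolynomial.eval (fun i => c * x i) F = c ^ d * MvPolynomial.eval x F := by
  rw [eval_eq', eval_eq', Finset.mul_sum]
  refine Finset.sum_congr rfl fun m hm => ?_
  have hdeg : ∑ i, m i = d := by
    have h1 : Finsupp.weight 1 m = d := hF (mem_support_iff.mp hm)
    have h2 : Finsupp.degree m = d := by rw [Finsupp.degree_eq_weight_one]; exact h1
    rw [← h2, Finsupp.degree]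
    exact (Finset.sum_subset (Finset.subset_univ _) fun i _ hi =>
      Finsupp.notMem_support_iff.mp hi).symm
  calc MvPolynomial.coeff m F * ∏ i, (c * x i) ^ m i
      = MvPolynomial.coeff m F * ((∏ i, c ^ m i) * ∏ i, x i ^ m i) := by
        rw [← Finset.prod_mul_distrib]; simp_rw [mul_pow]
    _ = c ^ d * (MvPolynomial.coeff m F * ∏ i, x i ^ m i) := by
        rw [Finset.prod_pow_eq_pow_sum, hdeg]; ring

lemma homog_zero_of_vanish (hn : 2 ≤ n) {F : MvPolynomial (Fin n) ℝ} {d : ℕ}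
    (hF : F.IsHomogeneous d) (hvan : ∀ x : Sph n, polyEval F x = 0) : F = 0 := by
  apply hF.eq_zero_of_forall_eval_eq_zero
  intro r
  by_cases hr : r = 0
  · -- use a base point on the sphere
    have hmem : EuclideanSpace.single (⟨0, by omega⟩ : Fin n) (1 : ℝ) ∈
        Metric.sphere (0 : EuclideanSpace ℝ (Fin n)) 1 := by
      rw [mem_sphere_zero_iff_norm, EuclideanSpace.norm_single]; norm_num
    set p0 : Sph n := ⟨_, hmem⟩
    have h := eval_smul_isHomog hF 0 (fun i => (p0 : EuclideanSpace ℝ (Fin n)) i)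
    have h2 : (fun i => (0 : ℝ) * (p0 : EuclideanSpace ℝ (Fin n)) i) = r := by
      funext i; rw [hr]; simp
    rw [h2] at h
    have hv : (MvPolynomial.eval fun i => (p0 : EuclideanSpace ℝ (Fin n)) i) F = 0 := hvan p0
    rw [h, hv, mul_zero]
  · set y : EuclideanSpace ℝ (Fin n) := WithLp.toLp 2 r with hy
    have hy0 : y ≠ 0 := (WithLp.toLp_eq_zero 2).not.mpr hr
    have hc : ‖y‖ ≠ 0 := norm_ne_zero_iff.mpr hy0
    have hmem : ‖y‖⁻¹ • y ∈ Metric.sphere (0 : EuclideanSpace ℝ (Fin n)) 1 := by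
      rw [mem_sphere_zero_iff_norm, norm_smul, norm_inv, norm_norm, inv_mul_cancel₀ hc]
    set u : Sph n := ⟨_, hmem⟩
    have h := eval_smul_isHomog hF ‖y‖ (fun i => (u : EuclideanSpace ℝ (Fin n)) i)
    have h2 : (fun i => ‖y‖ * (u : EuclideanSpace ℝ (Fin n)) i) = r := by
      funext i
      show ‖y‖ * (‖y‖⁻¹ • y) i = r i
      have : (‖y‖⁻¹ • y) i = ‖y‖⁻¹ * y i := rfl
      rw [this, mul_inv_cancel_left₀ hc]
    rw [h2] at h
    have hv : (MvPolynomial.eval fun i => (u : EuclideanSpace ℝ (Fin n)) i) F = 0 := hvan u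
    rw [h, hv, mul_zero]

/-- Polynomial evaluation as a linear map to functions on the sphere. -/
def L (n : ℕ) : MvPolynomial (Fin n) ℝ →ₗ[ℝ] (Sph n → ℝ) where
  toFun p := polyEval p
  map_add' p q := funext fun x => by simp [polyEval]
  map_smul' c p := funext fun x => by
    simp [polyEval, MvPolynomial.smul_eval]

abbrev DegIdx (n d : ℕ) := {m : Fin n →₀ ℕ // Finsupp.degree m = d}

def degEquiv (n d : ℕ) : DegIdx n d ≃ Sym (Fin n) d :=
  Equiv.subtypeEquiv (Multiset.toFinsupp (α := Fin n)).toEquiv.symm (by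
    intro m
    have key : Multiset.card ((Multiset.toFinsupp (α := Fin n)).toEquiv.symm m)
        = Finsupp.degree m := by
      set s := (Multiset.toFinsupp (α := Fin n)).toEquiv.symm m with hs
      have h1 : Multiset.toFinsupp s = m := by
        rw [hs]; exact (Multiset.toFinsupp (α := Fin n)).toEquiv.apply_symm_apply m
      have h2 := Multiset.toFinsupp_sum_eq s
      rw [h1] at h2
      rw [← h2]
      rfl
    rw [key])

instance degIdxFintype (n d : ℕ) : Fintype (DegIdx n d) :=
  Fintype.ofEquiv _ (degEquiv n d).symm

lemma card_degIdx (n d : ℕ) (hn : 1 ≤ n) :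
    Fintype.card (DegIdx n d) = (n + d - 1).choose (n - 1) := by
  rw [Fintype.card_congr (degEquiv n d), Sym.card_sym_eq_choose, Fintype.card_fin]
  have h1 : d ≤ n + d - 1 := by omega
  have h2 : n + d - 1 - d = n - 1 := by omega
  rw [← Nat.choose_symm h1, h2]

def fam (n t : ℕ) : DegIdx n t ⊕ DegIdx n (t - 1) → (Sph n → ℝ) :=
  fun i => L n (MvPolynomial.monomial (Sum.elim Subtype.val Subtype.val i) 1)

lemma fam_li (hn : 2 ≤ n) (t : ℕ) (ht : 1 ≤ t) : LinearIndependent ℝ (fam n t) := by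
  rw [Fintype.linearIndependent_iff]
  intro c hc
  set qt : MvPolynomial (Fin n) ℝ :=
    ∑ m : DegIdx n t, c (Sum.inl m) • MvPolynomial.monomial m.1 1 with hqt
  set qs : MvPolynomial (Fin n) ℝ :=
    ∑ m : DegIdx n (t - 1), c (Sum.inr m) • MvPolynomial.monomial m.1 1 with hqs
  have hqth : qt.IsHomogeneous t := by
    have : qt ∈ MvPolynomial.homogeneousSubmodule (Fin n) ℝ t :=
      Submodule.sum_mem _ fun m _ => Submodule.smul_mem _ _
        ((MvPolynomial.mem_homogeneousSubmodule _ _).mpr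
          (MvPolynomial.isHomogeneous_monomial _ m.2))
    exact (MvPolynomial.mem_homogeneousSubmodule _ _).mp this
  have hqsh : qs.IsHomogeneous (t - 1) := by
    have : qs ∈ MvPolynomial.homogeneousSubmodule (Fin n) ℝ (t - 1) :=
      Submodule.sum_mem _ fun m _ => Submodule.smul_mem _ _
        ((MvPolynomial.mem_homogeneousSubmodule _ _).mpr
          (MvPolynomial.isHomogeneous_monomial _ m.2))
    exact (MvPolynomial.mem_homogeneousSubmodule _ _).mp this
  have hL : L n qt + L n qs = 0 := by
    calc L n qt + L n qs = ∑ i, c i • fam n t i := by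
          rw [Fintype.sum_sum_type]
          rw [hqt, hqs, map_sum, map_sum]
          simp_rw [_root_.map_smul]
          rfl
      _ = 0 := hc
  have hpt : ∀ x : Sph n, polyEval qt x + polyEval qs x = 0 := by
    intro x
    have := congrFun hL x
    exact this
  -- parity
  have hparity : ∀ x : Sph n, polyEval qt x = 0 ∧ polyEval qs x = 0 := by
    intro x
    have hmem : -(x : EuclideanSpace ℝ (Fin n)) ∈
        Metric.sphere (0 : EuclideanSpace ℝ (Fin n)) 1 := by
      rw [mem_sphere_zero_iff_norm, norm_neg]
      exact mem_sphere_zero_iff_norm.mp x.2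
    set ax : Sph n := ⟨_, hmem⟩
    have hco : (fun i => (ax : EuclideanSpace ℝ (Fin n)) i)
        = fun i => (-1 : ℝ) * (x : EuclideanSpace ℝ (Fin n)) i := by
      funext i
      show (-(x : EuclideanSpace ℝ (Fin n))) i = _
      have : (-(x : EuclideanSpace ℝ (Fin n))) i = -((x : EuclideanSpace ℝ (Fin n)) i) := rfl
      rw [this]; ring
    have hqtax : polyEval qt ax = (-1 : ℝ) ^ t * polyEval qt x := by
      show MvPolynomial.eval _ qt = _
      rw [hco]
      exact eval_smul_isHomog hqth (-1) _
    have hqsax : polyEval qs ax = (-1 : ℝ) ^ (t - 1) * polyEval qs x := by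
      show MvPolynomial.eval _ qs = _
      rw [hco]
      exact eval_smul_isHomog hqsh (-1) _
    have e1 := hpt x
    have e2 := hpt ax
    rw [hqtax, hqsax] at e2
    set A := polyEval qt x
    set B := polyEval qs x
    have ht' : t = t - 1 + 1 := (Nat.succ_pred_eq_of_pos ht).symm
    have hpow : (-1 : ℝ) ^ t = (-1) ^ (t - 1) * (-1) := by
      conv_lhs => rw [ht']
      rw [pow_succ]
    rw [hpow] at e2
    have hne : (-1 : ℝ) ^ (t - 1) ≠ 0 := pow_ne_zero _ (by norm_num)
    have hBA : (-1 : ℝ) ^ (t - 1) * (B - A) = 0 := by linear_combination e2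
    have hBA' : B = A := by
      rcases mul_eq_zero.mp hBA with h | h
      · exact absurd h hne
      · linarith [sub_eq_zero.mp h]
    constructor <;> linarith
  have hqt0 : qt = 0 := homog_zero_of_vanish hn hqth fun x => (hparity x).1
  have hqs0 : qs = 0 := homog_zero_of_vanish hn hqsh fun x => (hparity x).2
  intro i
  have hcoeff : ∀ (d : ℕ) (cc : DegIdx n d → ℝ) (m0 : DegIdx n d),
      MvPolynomial.coeff m0.1 (∑ m : DegIdx n d, cc m • MvPolynomial.monomial m.1 1) = cc m0 := by
    intro d cc m0
    rw [MvPolynomial.coeff_sum]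
    rw [Finset.sum_eq_single m0]
    · rw [MvPolynomial.coeff_smul, MvPolynomial.coeff_monomial, if_pos rfl]; simp
    · intro m _ hne
      rw [MvPolynomial.coeff_smul, MvPolynomial.coeff_monomial,
        if_neg fun h => hne (Subtype.ext h), smul_zero]
    · intro h; exact absurd (Finset.mem_univ m0) h
  cases i with
  | inl m0 =>
    have := hcoeff t (fun m => c (Sum.inl m)) m0
    rw [← hqt, hqt0] at this
    simpa using this.symm
  | inr m0 =>
    have := hcoeff (t - 1) (fun m => c (Sum.inr m)) m0
    rw [← hqs, hqs0] at this
    simpa using this.symm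

lemma totalDegree_aeval_le (sub : Fin n → MvPolynomial (Fin n) ℝ)
    (hsub : ∀ i, (sub i).totalDegree ≤ 1) (q : MvPolynomial (Fin n) ℝ) :
    (MvPolynomial.aeval sub q).totalDegree ≤ q.totalDegree := by
  rw [MvPolynomial.aeval_def, MvPolynomial.eval₂_eq]
  refine (MvPolynomial.totalDegree_finset_sum _ _).trans ?_
  rw [Finset.sup_le_iff]
  intro m hm
  refine (MvPolynomial.totalDegree_mul _ _).trans ?_
  rw [MvPolynomial.algebraMap_eq, MvPolynomial.totalDegree_C, zero_add]
  refine (MvPolynomial.totalDegree_finset_prod _ _).trans ?_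
  refine le_trans ?_ (MvPolynomial.le_totalDegree hm)
  show _ ≤ m.sum fun _ e => e
  rw [Finsupp.sum]
  refine Finset.sum_le_sum fun i _ => ?_
  refine (MvPolynomial.totalDegree_pow _ _).trans ?_
  calc m i * (sub i).totalDegree ≤ m i * 1 := Nat.mul_le_mul_left _ (hsub i)
    _ = m i := Nat.mul_one _

lemma exists_poly_comp (U : EuclideanSpace ℝ (Fin n) ≃ₗᵢ[ℝ] EuclideanSpace ℝ (Fin n))
    (q : MvPolynomial (Fin n) ℝ) :
    ∃ q' : MvPolynomial (Fin n) ℝ, q'.totalDegree ≤ q.totalDegree ∧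
      ∀ x : Sph n, polyEval q' x = polyEval q (sphMap U x) := by
  classical
  set a : Fin n → Fin n → ℝ := fun j i =>
    (U (WithLp.toLp 2 (fun k => if j = k then (1 : ℝ) else 0) : EuclideanSpace ℝ (Fin n)) :
      EuclideanSpace ℝ (Fin n)) i with ha
  set sub : Fin n → MvPolynomial (Fin n) ℝ :=
    fun i => ∑ j, MvPolynomial.C (a j i) * MvPolynomial.X j with hsubdef
  have hsub : ∀ i, (sub i).totalDegree ≤ 1 := by
    intro i
    refine (MvPolynomial.totalDegree_finset_sum _ _).trans ?_
    rw [Finset.sup_le_iff]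
    intro j _
    refine (MvPolynomial.totalDegree_mul _ _).trans ?_
    rw [MvPolynomial.totalDegree_C, zero_add, MvPolynomial.totalDegree_X]
  have key : ∀ (y : EuclideanSpace ℝ (Fin n)) (i : Fin n),
      (U y : EuclideanSpace ℝ (Fin n)) i = ∑ j, y j * a j i := by
    intro y i
    let f : (Fin n → ℝ) →ₗ[ℝ] ℝ :=
      { toFun := fun z => (U (WithLp.toLp 2 z : EuclideanSpace ℝ (Fin n)) : EuclideanSpace ℝ (Fin n)) i
        map_add' := by
          intro z w
          show (U (WithLp.toLp 2 (z + w)) : EuclideanSpace ℝ (Fin n)) i = _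
          rw [WithLp.toLp_add, map_add]
          rfl
        map_smul' := by
          intro c z
          show (U (WithLp.toLp 2 (c • z)) : EuclideanSpace ℝ (Fin n)) i = _
          rw [WithLp.toLp_smul, _root_.map_smul]
          rfl }
    have h := LinearMap.pi_apply_eq_sum_univ f (WithLp.ofLp y)
    simpa [f, ha, smul_eq_mul] using h
  refine ⟨MvPolynomial.aeval sub q, totalDegree_aeval_le sub hsub q, ?_⟩
  intro x
  show MvPolynomial.eval (fun i => (x : EuclideanSpace ℝ (Fin n)) i) (MvPolynomial.aeval sub q)
      = MvPolynomial.eval (fun i => (sphMap U x : EuclideanSpace ℝ (Fin n)) i) q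
  rw [MvPolynomial.aeval_def, MvPolynomial.algebraMap_eq,
    ← MvPolynomial.eval_assoc]
  have hfun : (⇑(MvPolynomial.eval fun i => (x : EuclideanSpace ℝ (Fin n)) i) ∘ sub)
      = fun i => (sphMap U x : EuclideanSpace ℝ (Fin n)) i := by
    funext i
    show MvPolynomial.eval _ (sub i) = _
    have hR : (sphMap U x : EuclideanSpace ℝ (Fin n)) i
        = ∑ j, (x : EuclideanSpace ℝ (Fin n)) j * a j i := key _ i
    rw [hR, hsubdef]
    rw [map_sum]
    simp only [map_mul, MvPolynomial.eval_C, MvPolynomial.eval_X]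
    exact Finset.sum_congr rfl fun j _ => mul_comm _ _
  rw [hfun]

end CubAux

set_option maxHeartbeats 1000000 in
theorem stmt10 (n t : ℕ) (hn : 2 ≤ n) (ht : 1 ≤ t)
    (σ : Measure (Sph n)) [IsProbabilityMeasure σ] (hσ : IsRotationInvariant σ)
    (θ : ℝ) (hθ : θ ∈ Set.Ioo (0 : ℝ) 1)
    (ν : Measure (Sph n)) (hν : IsCubature (2 * t) σ ν) :
    (((n + t - 1).choose (n - 1) + (n + t - 2).choose (n - 1) : ℕ) : ℝ) ^ (1 - θ) ≤
      thetaNorm ν θ := by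
  classical
  obtain ⟨hνp, ⟨s, hs⟩, hcub⟩ := hν
  obtain ⟨hθ0, hθ1⟩ := hθ
  set N : ℕ := (n + t - 1).choose (n - 1) + (n + t - 2).choose (n - 1) with hN
  set V : Submodule ℝ (Sph n → ℝ) := Submodule.span ℝ (Set.range (CubAux.fam n t)) with hV
  have hli := CubAux.fam_li hn t ht
  haveI hfd : FiniteDimensional ℝ V := Module.Finite.span_of_finite ℝ (Set.finite_range _)
  have hcard : Fintype.card (CubAux.DegIdx n t ⊕ CubAux.DegIdx n (t - 1)) = N := by
    rw [Fintype.card_sum, CubAux.card_degIdx n t (by omega),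
      CubAux.card_degIdx n (t - 1) (by omega), hN]
    have h2 : n + (t - 1) - 1 = n + t - 2 := by omega
    rw [h2]
  have hrank : Module.finrank ℝ V = N := by
    rw [hV, finrank_span_eq_card hli, hcard]
  have hNpos : 0 < N := by
    have : 0 < (n + t - 1).choose (n - 1) := Nat.choose_pos (by omega)
    omega
  have hNR : (0 : ℝ) < (N : ℝ) := by exact_mod_cast hNpos
  -- elements of V are restrictions of polynomials of degree at most t
  have hVdeg : ∀ f : V, ∃ q : MvPolynomial (Fin n) ℝ,
      q.totalDegree ≤ t ∧ polyEval q = (f : Sph n → ℝ) := by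
    intro f
    have hle : V ≤ Submodule.map (CubAux.L n)
        (MvPolynomial.restrictTotalDegree (Fin n) ℝ t) := by
      rw [hV, Submodule.span_le]
      rintro _ ⟨i, rfl⟩
      refine ⟨MvPolynomial.monomial (Sum.elim Subtype.val Subtype.val i) 1, ?_, rfl⟩
      rw [SetLike.mem_coe, MvPolynomial.mem_restrictTotalDegree,
        MvPolynomial.totalDegree_monomial _ one_ne_zero]
      cases i with
      | inl m =>
        show ((m.1.sum fun _ e => e)) ≤ t
        rw [show (m.1.sum fun _ e => e) = Finsupp.degree m.1 from rfl, m.2]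
      | inr m =>
        show ((m.1.sum fun _ e => e)) ≤ t
        rw [show (m.1.sum fun _ e => e) = Finsupp.degree m.1 from rfl, m.2]
        omega
    obtain ⟨q, hq, hq2⟩ := hle f.2
    exact ⟨q, (MvPolynomial.mem_restrictTotalDegree _ _ _).mp hq, hq2⟩
  have hVcont : ∀ f : V, Continuous (f : Sph n → ℝ) := by
    intro f
    obtain ⟨q, _, hq⟩ := hVdeg f
    rw [← hq]
    exact CubAux.polyEval_continuous q
  -- the inner product on V
  letI innerV : InnerProductSpace.Core ℝ V :=
    { inner := fun f g => ∫ x, (f : Sph n → ℝ) x * (g : Sph n → ℝ) x ∂σ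
      conj_inner_symm := by
        intro f g
        show (starRingEnd ℝ) (∫ x, (g : Sph n → ℝ) x * (f : Sph n → ℝ) x ∂σ)
            = ∫ x, (f : Sph n → ℝ) x * (g : Sph n → ℝ) x ∂σ
        rw [starRingEnd_apply, star_trivial]
        congr 1
        funext x
        ring
      re_inner_nonneg := by
        intro f
        show (0 : ℝ) ≤ ∫ x, (f : Sph n → ℝ) x * (f : Sph n → ℝ) x ∂σ
        exact integral_nonneg fun x => mul_self_nonneg _
      add_left := by
        intro f g h
        show ∫ x, ((f + g : V) : Sph n → ℝ) x * (h : Sph n → ℝ) x ∂σ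
            = (∫ x, (f : Sph n → ℝ) x * (h : Sph n → ℝ) x ∂σ)
              + ∫ x, (g : Sph n → ℝ) x * (h : Sph n → ℝ) x ∂σ
        rw [show (fun x => ((f + g : V) : Sph n → ℝ) x * (h : Sph n → ℝ) x)
            = fun x => (f : Sph n → ℝ) x * (h : Sph n → ℝ) x
              + (g : Sph n → ℝ) x * (h : Sph n → ℝ) x from funext fun x => by
          show ((f : Sph n → ℝ) x + (g : Sph n → ℝ) x) * (h : Sph n → ℝ) x = _
          ring]
        exact integral_add
          (CubAux.cont_integrable ((hVcont f).mul (hVcont h)))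
          (CubAux.cont_integrable ((hVcont g).mul (hVcont h)))
      smul_left := by
        intro f g r
        show ∫ x, ((r • f : V) : Sph n → ℝ) x * (g : Sph n → ℝ) x ∂σ
            = (starRingEnd ℝ) r * ∫ x, (f : Sph n → ℝ) x * (g : Sph n → ℝ) x ∂σ
        rw [starRingEnd_apply, star_trivial]
        rw [show (fun x => ((r • f : V) : Sph n → ℝ) x * (g : Sph n → ℝ) x)
            = fun x => r * ((f : Sph n → ℝ) x * (g : Sph n → ℝ) x) from funext fun x => by
          show (r * (f : Sph n → ℝ) x) * (g : Sph n → ℝ) x = _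
          ring]
        exact MeasureTheory.integral_const_mul r _
      definite := by
        intro f hf
        have hf' : ∫ x, (f : Sph n → ℝ) x * (f : Sph n → ℝ) x ∂σ = 0 := hf
        by_contra hne
        have hx : ∃ x, (f : Sph n → ℝ) x ≠ 0 := by
          by_contra hall
          push_neg at hall
          exact hne (Subtype.ext (funext fun x => hall x))
        obtain ⟨x₀, hx₀⟩ := hx
        have hpos := CubAux.integral_pos σ hσ ((hVcont f).mul (hVcont f))
          (fun x => mul_self_nonneg _) (mul_ne_zero hx₀ hx₀)
        simp only [Pi.mul_apply] at hpos
        rw [hf'] at hpos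
        exact lt_irrefl _ hpos }
  letI : NormedAddCommGroup V := innerV.toNormedAddCommGroup
  letI : InnerProductSpace ℝ V := InnerProductSpace.ofCore innerV.toCore
  set φ := stdOrthonormalBasis ℝ V with hφ
  set F : Sph n → ℝ := fun x => ∑ i, ((φ i : V) : Sph n → ℝ) x * ((φ i : V) : Sph n → ℝ) x
    with hF
  have hFcont : Continuous F := by
    apply continuous_finset_sum
    intro i _
    exact (hVcont (φ i)).mul (hVcont (φ i))
  have hιcard : ∀ i, (inner ℝ (φ i) (φ i) : ℝ) = 1 := by
    intro i
    rw [real_inner_self_eq_norm_mul_norm, φ.orthonormal.1 i, mul_one]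
  have hFint : ∫ x, F x ∂σ = (N : ℝ) := by
    rw [hF]
    rw [integral_finset_sum _ fun i _ =>
      (CubAux.cont_integrable ((hVcont (φ i)).mul (hVcont (φ i))) :
        Integrable (fun x => ((φ i : V) : Sph n → ℝ) x * ((φ i : V) : Sph n → ℝ) x) σ)]
    have heach : ∀ i, ∫ x, ((φ i : V) : Sph n → ℝ) x * ((φ i : V) : Sph n → ℝ) x ∂σ = 1 :=
      fun i => hιcard i
    rw [Finset.sum_congr rfl fun i _ => heach i]
    rw [Finset.sum_const, Finset.card_univ, Fintype.card_fin, hrank]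
    simp
  -- a point where F is at least N
  have hex : ∃ x₀ : Sph n, (N : ℝ) ≤ F x₀ := by
    by_contra hno
    push_neg at hno
    have hmem : EuclideanSpace.single (⟨0, by omega⟩ : Fin n) (1 : ℝ) ∈
        Metric.sphere (0 : EuclideanSpace ℝ (Fin n)) 1 := by
      rw [mem_sphere_zero_iff_norm, EuclideanSpace.norm_single]
      norm_num
    set pt : Sph n := ⟨_, hmem⟩
    have hpos := CubAux.integral_pos σ hσ (f := fun x => (N : ℝ) - F x)
      (continuous_const.sub hFcont) (fun x => sub_nonneg.mpr (le_of_lt (hno x)))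
      (x₀ := pt) (ne_of_gt (sub_pos.mpr (hno pt)))
    have hzero : ∫ x, ((N : ℝ) - F x) ∂σ = 0 := by
      rw [integral_sub (integrable_const _) (CubAux.cont_integrable hFcont), hFint]
      simp
    rw [hzero] at hpos
    exact lt_irrefl _ hpos
  obtain ⟨x₀, hx₀⟩ := hex
  have hFx₀pos : (0 : ℝ) < F x₀ := lt_of_lt_of_le hNR hx₀
  -- the kernel function at x₀
  set g : V := ∑ i, ((φ i : V) : Sph n → ℝ) x₀ • φ i with hg
  have hgcoe : (g : Sph n → ℝ)
      = ∑ i, ((φ i : V) : Sph n → ℝ) x₀ • ((φ i : V) : Sph n → ℝ) := by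
    rw [hg]
    have h1 := map_sum V.subtype (fun i => ((φ i : V) : Sph n → ℝ) x₀ • φ i) Finset.univ
    have h2 : ∀ i : Fin (Module.finrank ℝ V),
        V.subtype (((φ i : V) : Sph n → ℝ) x₀ • φ i)
          = ((φ i : V) : Sph n → ℝ) x₀ • ((φ i : V) : Sph n → ℝ) := fun i => rfl
    rw [show ((∑ i, ((φ i : V) : Sph n → ℝ) x₀ • φ i : V) : Sph n → ℝ)
        = V.subtype (∑ i, ((φ i : V) : Sph n → ℝ) x₀ • φ i) from rfl, h1]
    exact Finset.sum_congr rfl fun i _ => h2 i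
  have hgx₀ : (g : Sph n → ℝ) x₀ = F x₀ := by
    rw [hgcoe, hF]
    rw [Finset.sum_apply]
    exact Finset.sum_congr rfl fun i _ => rfl
  have hone : ∀ i j, (inner ℝ (φ i) (φ j) : ℝ) = if i = j then 1 else 0 :=
    fun i j => orthonormal_iff_ite.mp φ.orthonormal i j
  have hinner : (inner ℝ g g : ℝ) = F x₀ := by
    rw [hg, sum_inner]
    have hthis : ∀ i, (inner ℝ (((φ i : V) : Sph n → ℝ) x₀ • φ i)
          (∑ j, ((φ j : V) : Sph n → ℝ) x₀ • φ j) : ℝ)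
        = ((φ i : V) : Sph n → ℝ) x₀ * ((φ i : V) : Sph n → ℝ) x₀ := by
      intro i
      rw [real_inner_smul_left, inner_sum]
      simp_rw [real_inner_smul_right, hone]
      have hsum : ∑ j, ((φ j : V) : Sph n → ℝ) x₀ * (if i = j then (1 : ℝ) else 0)
          = ((φ i : V) : Sph n → ℝ) x₀ := by
        rw [Finset.sum_eq_single i (fun j _ hj => by
            rw [if_neg fun h => hj h.symm, mul_zero])
          (fun h => absurd (Finset.mem_univ i) h)]
        rw [if_pos rfl, mul_one]
      rw [hsum]
    rw [Finset.sum_congr rfl fun i _ => hthis i, hF]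
  -- the per-point weight bound
  have hw : ∀ ξ : Sph n, (ν {ξ}).toReal * (N : ℝ) ≤ 1 := by
    intro ξ
    obtain ⟨U, hU⟩ := CubAux.exists_sphMap ξ x₀
    obtain ⟨q, hqdeg, hq2⟩ := hVdeg g
    obtain ⟨q', hq'le, hq'2⟩ := CubAux.exists_poly_comp U q
    have hp : ∀ x, polyEval q' x = (g : Sph n → ℝ) (sphMap U x) := by
      intro x
      rw [hq'2 x, hq2]
    have hdeg2 : (q' * q').totalDegree ≤ 2 * t := by
      have h1 := hq'le.trans hqdeg
      have h2 := MvPolynomial.totalDegree_mul q' q'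
      omega
    have hmul : ∀ x : Sph n, polyEval (q' * q') x = polyEval q' x * polyEval q' x := by
      intro x
      show MvPolynomial.eval _ (q' * q') = _
      rw [map_mul]
      rfl
    have hRHS : ∫ x, polyEval (q' * q') x ∂σ = F x₀ := by
      have h1 : ∫ x, polyEval (q' * q') x ∂σ
          = ∫ x, ((g : Sph n → ℝ) (sphMap U x) * (g : Sph n → ℝ) (sphMap U x)) ∂σ := by
        congr 1
        funext x
        rw [hmul, hp]
      have h2 : ∫ y, ((g : Sph n → ℝ) y * (g : Sph n → ℝ) y) ∂σ
          = ∫ x, ((g : Sph n → ℝ) (sphMap U x) * (g : Sph n → ℝ) (sphMap U x)) ∂σ := by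
        conv_lhs => rw [← hσ U]
        exact integral_map (sphMap_continuous U).aemeasurable
          ((hVcont g).mul (hVcont g)).aestronglyMeasurable
      rw [h1, ← h2]
      exact hinner
    have hint : Integrable (fun x => polyEval (q' * q') x) ν :=
      CubAux.cont_integrable (CubAux.polyEval_continuous _)
    have hnn : 0 ≤ᵐ[ν] fun x => polyEval (q' * q') x :=
      Filter.Eventually.of_forall fun x => by
        simp only [Pi.zero_apply]
        rw [hmul]
        exact mul_self_nonneg _
    have hsingle : ∫ x in ({ξ} : Set (Sph n)), polyEval (q' * q') x ∂ν
        = (ν {ξ}).toReal * (F x₀ * F x₀) := by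
      rw [integral_singleton]
      rw [smul_eq_mul, hmul, hp, hU, hgx₀]
      rfl
    have hle := setIntegral_le_integral (s := ({ξ} : Set (Sph n))) hint hnn
    rw [hsingle, hcub (q' * q') hdeg2, hRHS] at hle
    have hw0 : (0 : ℝ) ≤ (ν {ξ}).toReal := ENNReal.toReal_nonneg
    have hwF : (ν {ξ}).toReal * F x₀ ≤ 1 := by
      by_contra hcon
      push_neg at hcon
      have hstep := mul_lt_mul_of_pos_right hcon hFx₀pos
      rw [one_mul, mul_assoc] at hstep
      linarith [hle, hstep]
    calc (ν {ξ}).toReal * (N : ℝ) ≤ (ν {ξ}).toReal * F x₀ :=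
          mul_le_mul_of_nonneg_left hx₀ hw0
      _ ≤ 1 := hwF
  -- final summation argument
  set s' := s.filter (fun u => ν {u} ≠ 0) with hs'
  have hoff : ∀ u : Sph n, u ∉ s' → (ν {u}).toReal ^ θ = 0 := by
    intro u hu
    have h0 : ν {u} = 0 := by
      by_cases hus : u ∈ s
      · by_contra hne
        exact hu (Finset.mem_filter.mpr ⟨hus, hne⟩)
      · refine measure_mono_null ?_ hs
        intro z hz
        rw [Set.mem_singleton_iff] at hz
        subst hz
        simpa using hus
    rw [h0, ENNReal.toReal_zero, Real.zero_rpow (ne_of_gt hθ0)]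
  have htn : thetaNorm ν θ = ∑ u ∈ s', (ν {u}).toReal ^ θ := tsum_eq_sum hoff
  have hsmeas : MeasurableSet (↑s : Set (Sph n)) := s.finite_toSet.measurableSet
  have hsball : ν ↑s = 1 := by
    have h := measure_add_measure_compl (μ := ν) hsmeas
    rw [hs, add_zero, measure_univ] at h
    exact h
  have hssum : ∑ u ∈ s, ν {u} = 1 := by
    rw [← hsball]
    have hcover : (↑s : Set (Sph n)) = ⋃ u ∈ s, {u} := by
      ext z
      simp only [Finset.mem_coe, Set.mem_iUnion, Set.mem_singleton_iff]
      exact ⟨fun h => ⟨z, h, rfl⟩, fun ⟨u, hu, hz⟩ => hz ▸ hu⟩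
    rw [hcover, measure_biUnion_finset ?_ fun b _ => measurableSet_singleton b]
    intro u _ v _ huv
    simp only [Function.onFun, Set.disjoint_singleton]
    exact huv
  have hsum1 : ∑ u ∈ s', (ν {u}).toReal = 1 := by
    have hsub : ∑ u ∈ s', (ν {u}).toReal = ∑ u ∈ s, (ν {u}).toReal := by
      rw [hs']
      refine Finset.sum_subset (Finset.filter_subset _ _) fun u hu hnu => ?_
      have h0 : ν {u} = 0 := by
        by_contra hne
        exact hnu (Finset.mem_filter.mpr ⟨hu, hne⟩)
      rw [h0, ENNReal.toReal_zero]
    rw [hsub, ← ENNReal.toReal_sum fun u _ => measure_ne_top ν _, hssum, ENNReal.toReal_one]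
  have hterm : ∀ u ∈ s', (ν {u}).toReal * (N : ℝ) ^ (1 - θ) ≤ (ν {u}).toReal ^ θ := by
    intro u hu
    have hwpos : 0 < (ν {u}).toReal :=
      ENNReal.toReal_pos (Finset.mem_filter.mp hu).2 (measure_ne_top ν _)
    have hwN : (ν {u}).toReal ≤ 1 / (N : ℝ) := by
      rw [le_div_iff₀ hNR]
      exact hw u
    have h1 : (1 / (N : ℝ)) ^ (θ - 1) ≤ (ν {u}).toReal ^ (θ - 1) :=
      Real.rpow_le_rpow_of_nonpos hwpos hwN (by linarith)
    have h2 : (1 / (N : ℝ)) ^ (θ - 1) = (N : ℝ) ^ (1 - θ) := by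
      rw [one_div, Real.inv_rpow (le_of_lt hNR), ← Real.rpow_neg (le_of_lt hNR), neg_sub]
    have h3 : (ν {u}).toReal ^ θ = (ν {u}).toReal * (ν {u}).toReal ^ (θ - 1) := by
      have h4 := Real.rpow_add hwpos 1 (θ - 1)
      rw [show (1 : ℝ) + (θ - 1) = θ by ring] at h4
      rw [h4, Real.rpow_one]
    rw [h3, ← h2]
    exact mul_le_mul_of_nonneg_left h1 (le_of_lt hwpos)
  calc ((N : ℕ) : ℝ) ^ (1 - θ)
      = (∑ u ∈ s', (ν {u}).toReal) * (N : ℝ) ^ (1 - θ) := by rw [hsum1, one_mul]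
    _ = ∑ u ∈ s', (ν {u}).toReal * (N : ℝ) ^ (1 - θ) := by rw [Finset.sum_mul]
    _ ≤ ∑ u ∈ s', (ν {u}).toReal ^ θ := Finset.sum_le_sum hterm
    _ = thetaNorm ν θ := htn.symm
end
end

section
/- Let n ≥ 2 and t ≥ 1 be integers and θ ∈ (0,1). Then every cubature formula ν of strength 2t+1 on S^{n-1} satisfies ‖ν‖_θ ≥ (2·C(n+t-1, n-1))^{1−θ}, where C(a,b) denotes the binomial coefficient. -/
open MeasureTheory Metric
open scoped ENNReal

noncomputable section

namespace Stmt11Aux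

open MvPolynomial

variable {n t : ℕ}

/-- Continuity of polynomial evaluation on the sphere. -/
lemma continuous_polyEval (p : MvPolynomial (Fin n) ℝ) : Continuous (polyEval p) := by
  have h : Continuous fun x : EuclideanSpace ℝ (Fin n) =>
      MvPolynomial.eval (fun i => x i) p := by
    simp only [MvPolynomial.eval_eq]
    refine continuous_finset_sum _ fun d _ => Continuous.mul continuous_const ?_
    refine continuous_finset_prod _ fun i _ => ?_
    have hc : Continuous fun x : EuclideanSpace ℝ (Fin n) => x i := by
      simpa using (EuclideanSpace.proj (𝕜 := ℝ) (ι := Fin n) i).continuous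
    exact hc.pow _
  exact h.comp continuous_subtype_val

/-- Scaling identity for evaluation of homogeneous polynomials. -/
lemma eval_homog {p : MvPolynomial (Fin n) ℝ} {m : ℕ} (hp : p.IsHomogeneous m)
    (c : ℝ) (x : Fin n → ℝ) :
    MvPolynomial.eval (fun i => c * x i) p = c ^ m * MvPolynomial.eval x p := by
  rw [MvPolynomial.eval_eq, MvPolynomial.eval_eq, Finset.mul_sum]
  refine Finset.sum_congr rfl fun d hd => ?_
  have hdeg : ∑ i ∈ d.support, d i = m := by
    have h1 := hp (MvPolynomial.mem_support_iff.mp hd)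
    have h2 : (Finsupp.degree d) = m := by
      rw [Finsupp.degree_eq_weight_one]; exact h1
    simpa [Finsupp.degree_apply] using h2
  simp_rw [mul_pow]
  rw [Finset.prod_mul_distrib, Finset.prod_pow_eq_pow_sum, hdeg]
  ring

end Stmt11Aux
namespace Stmt11Aux
open MvPolynomial

/-- `polyEval` as a linear map. -/
def evalL (n : ℕ) : MvPolynomial (Fin n) ℝ →ₗ[ℝ] (Sph n → ℝ) where
  toFun p := polyEval p
  map_add' p q := funext fun x => by simp [polyEval]
  map_smul' c p := funext fun x => by
    simp [polyEval, MvPolynomial.smul_eq_C_mul]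

variable {n t : ℕ}

def homogSub (n t : ℕ) : Submodule ℝ (MvPolynomial (Fin n) ℝ) :=
  MvPolynomial.homogeneousSubmodule (Fin n) ℝ t

def Wsub (n t : ℕ) : Submodule ℝ (Sph n → ℝ) := (homogSub n t).map (evalL n)

lemma mem_Wsub_iff {f : Sph n → ℝ} :
    f ∈ Wsub n t ↔ ∃ p : MvPolynomial (Fin n) ℝ, p.IsHomogeneous t ∧ polyEval p = f := by
  constructor
  · rintro ⟨p, hp, rfl⟩
    exact ⟨p, (MvPolynomial.mem_homogeneousSubmodule _ _).mp hp, rfl⟩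
  · rintro ⟨p, hp, rfl⟩
    exact ⟨p, (MvPolynomial.mem_homogeneousSubmodule _ _).mpr hp, rfl⟩

lemma continuous_of_mem_Wsub {f : Sph n → ℝ} (hf : f ∈ Wsub n t) : Continuous f := by
  obtain ⟨p, _, rfl⟩ := mem_Wsub_iff.mp hf
  exact continuous_polyEval p

/-- The set of exponents of given degree is finite. -/
lemma finite_degreeSet (n t : ℕ) : {d : Fin n →₀ ℕ | d.degree = t}.Finite := by
  have h := Finsupp.finite_of_degree_le (σ := Fin n) t
  exact h.subset fun d hd => le_of_eq hd

/-- Exponents of degree `t` are in bijection with multisets of size `t`. -/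
def degreeEquivSym (n t : ℕ) : {d : Fin n →₀ ℕ // d.degree = t} ≃ Sym (Fin n) t where
  toFun d := ⟨Finsupp.toMultiset d.1, by
    rw [Finsupp.card_toMultiset]
    simpa [Finsupp.degree_apply, Finsupp.sum] using d.2⟩
  invFun m := ⟨Multiset.toFinsupp m.1, by
    have : Finsupp.toMultiset (Multiset.toFinsupp m.1) = m.1 := by simp
    have hc := Finsupp.card_toMultiset (Multiset.toFinsupp m.1)
    rw [this] at hc
    have hm : Multiset.card m.1 = t := m.2
    simpa [Finsupp.degree_apply, Finsupp.sum, hm] using hc.symm⟩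
  left_inv d := by ext : 1; simp
  right_inv m := by ext : 1; simp

lemma finrank_homogSub (n t : ℕ) :
    Module.finrank ℝ (homogSub n t) = (n + t - 1).choose t := by
  classical
  letI : Fintype {d : Fin n →₀ ℕ | d.degree = t} := (finite_degreeSet n t).fintype
  have e1 : (homogSub n t) ≃ₗ[ℝ]
      ({d : Fin n →₀ ℕ | d.degree = t} →₀ ℝ) :=
    (LinearEquiv.ofEq _ _
      (MvPolynomial.homogeneousSubmodule_eq_finsupp_supported (Fin n) ℝ t)).trans
      (AddMonoidAlgebra.supportedEquivFinsupp _)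
  rw [e1.finrank_eq, Module.finrank_finsupp_self]
  have : Fintype.card {d : Fin n →₀ ℕ | d.degree = t} = Fintype.card (Sym (Fin n) t) :=
    Fintype.card_congr (degreeEquivSym n t)
  rw [this, Sym.card_sym_eq_choose, Fintype.card_fin]

instance : FiniteDimensional ℝ (homogSub n t) := by
  classical
  letI : Fintype {d : Fin n →₀ ℕ | d.degree = t} := (finite_degreeSet n t).fintype
  have e1 : (homogSub n t) ≃ₗ[ℝ]
      ({d : Fin n →₀ ℕ | d.degree = t} →₀ ℝ) :=
    (LinearEquiv.ofEq _ _
      (MvPolynomial.homogeneousSubmodule_eq_finsupp_supported (Fin n) ℝ t)).trans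
      (AddMonoidAlgebra.supportedEquivFinsupp _)
  exact Module.Finite.equiv e1.symm

instance : FiniteDimensional ℝ (Wsub n t) :=
  Module.Finite.map (homogSub n t) (evalL n)

end Stmt11Aux
namespace Stmt11Aux
open MvPolynomial

variable {n t : ℕ}

/-- A homogeneous polynomial of positive degree vanishing on the sphere is zero. -/
lemma evalL_inj_on_homog (hn : 1 ≤ n) (ht : 1 ≤ t) {p : MvPolynomial (Fin n) ℝ}
    (hp : p.IsHomogeneous t) (h0 : polyEval p = (0 : Sph n → ℝ)) : p = 0 := by
  apply hp.eq_zero_of_forall_eval_eq_zero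
  intro x
  set y : EuclideanSpace ℝ (Fin n) := (WithLp.equiv 2 (Fin n → ℝ)).symm x with hy
  have hyx : ∀ i, y i = x i := fun i => rfl
  by_cases h : y = 0
  · have hx0 : x = fun _ => (0 : ℝ) := by
      funext i
      rw [← hyx i, h]
      rfl
    rw [hx0]
    have := MvPolynomial.eval_zero' (R := ℝ) (σ := Fin n)
    rw [this]
    exact hp.coeff_eq_zero (by simpa [map_zero] using (by omega : (0:ℕ) ≠ t))
  · have hc : (0 : ℝ) < ‖y‖ := norm_pos_iff.mpr h
    set c : ℝ := ‖y‖ with hcdef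
    set u : EuclideanSpace ℝ (Fin n) := c⁻¹ • y with hu
    have hnu : ‖u‖ = 1 := by
      rw [hu, norm_smul, norm_inv, norm_norm, ← hcdef, inv_mul_cancel₀ hc.ne']
    have hmem : u ∈ Metric.sphere (0 : EuclideanSpace ℝ (Fin n)) 1 :=
      mem_sphere_zero_iff_norm.mpr hnu
    have hz : polyEval p (⟨u, hmem⟩ : Sph n) = 0 := by rw [h0]; rfl
    have hz' : MvPolynomial.eval (fun i => u i) p = 0 := hz
    have hxc : (fun i => x i) = fun i => c * u i := by
      funext i
      have : u i = c⁻¹ * y i := rfl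
      rw [this, hyx i]
      field_simp
    calc MvPolynomial.eval x p = MvPolynomial.eval (fun i => c * u i) p := by rw [← hxc]
      _ = c ^ t * MvPolynomial.eval (fun i => u i) p := eval_homog hp c _
      _ = 0 := by rw [hz', mul_zero]

lemma finrank_Wsub (hn : 1 ≤ n) (ht : 1 ≤ t) :
    Module.finrank ℝ (Wsub n t) = (n + t - 1).choose t := by
  classical
  set f : (homogSub n t) →ₗ[ℝ] (Sph n → ℝ) := (evalL n).comp (homogSub n t).subtype with hf
  have hrange : LinearMap.range f = Wsub n t := by
    rw [hf, LinearMap.range_comp, Submodule.range_subtype]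
    rfl
  have hinj : Function.Injective f := by
    rw [← LinearMap.ker_eq_bot, LinearMap.ker_eq_bot']
    rintro ⟨p, hp⟩ hfp
    have : polyEval p = (0 : Sph n → ℝ) := hfp
    have hp0 : p = 0 :=
      evalL_inj_on_homog hn ht ((MvPolynomial.mem_homogeneousSubmodule _ _).mp hp) this
    exact Subtype.ext hp0
  calc Module.finrank ℝ (Wsub n t)
      = Module.finrank ℝ (LinearMap.range f) := by rw [hrange]
    _ = Module.finrank ℝ (homogSub n t) := (LinearEquiv.ofInjective f hinj).symm.finrank_eq
    _ = (n + t - 1).choose t := finrank_homogSub n t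

/-- Transitivity: any point of the sphere can be mapped to any other by an isometry. -/
lemma exists_sphMap_eq (x y : Sph n) : ∃ U, sphMap U x = y := by
  have hx : ‖(x : EuclideanSpace ℝ (Fin n))‖ = 1 := mem_sphere_zero_iff_norm.mp x.2
  have hy : ‖(y : EuclideanSpace ℝ (Fin n))‖ = 1 := mem_sphere_zero_iff_norm.mp y.2
  refine ⟨Submodule.reflection (ℝ ∙ ((x : EuclideanSpace ℝ (Fin n)) - y))ᗮ, ?_⟩
  apply Subtype.ext
  have := Submodule.reflection_sub (v := (x : EuclideanSpace ℝ (Fin n)))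
    (w := (y : EuclideanSpace ℝ (Fin n))) (by rw [hx, hy])
  simpa [sphMap] using this

end Stmt11Aux
namespace Stmt11Aux
open MvPolynomial

variable {n t : ℕ}

lemma aeval_eq_eval (g : Fin n → ℝ) (p : MvPolynomial (Fin n) ℝ) :
    MvPolynomial.aeval g p = MvPolynomial.eval g p := rfl

/-- The linear polynomial giving the `i`-th coordinate of `U x`. -/
def linPoly (U : EuclideanSpace ℝ (Fin n) ≃ₗᵢ[ℝ] EuclideanSpace ℝ (Fin n)) (i : Fin n) :
    MvPolynomial (Fin n) ℝ :=
  ∑ j : Fin n, MvPolynomial.C ((U (EuclideanSpace.single j 1)) i) * MvPolynomial.X j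

lemma linPoly_isHomogeneous (U : EuclideanSpace ℝ (Fin n) ≃ₗᵢ[ℝ] EuclideanSpace ℝ (Fin n))
    (i : Fin n) : (linPoly U i).IsHomogeneous 1 :=
  MvPolynomial.IsHomogeneous.sum _ _ _ fun j _ => MvPolynomial.isHomogeneous_C_mul_X _ _

lemma apply_coord_eq_sum (U : EuclideanSpace ℝ (Fin n) ≃ₗᵢ[ℝ] EuclideanSpace ℝ (Fin n))
    (i : Fin n) (x : EuclideanSpace ℝ (Fin n)) :
    (U x) i = ∑ j : Fin n, (U (EuclideanSpace.single j 1)) i * x j := by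
  have hx : x = ∑ j : Fin n, x j • EuclideanSpace.single j 1 := by
    have h := (EuclideanSpace.basisFun (Fin n) ℝ).sum_repr x
    simp only [EuclideanSpace.basisFun_repr, EuclideanSpace.basisFun_apply] at h
    exact h.symm
  calc (U x) i = EuclideanSpace.proj i (U x) := rfl
    _ = EuclideanSpace.proj i (U (∑ j : Fin n, x j • EuclideanSpace.single j 1)) := by rw [← hx]
    _ = ∑ j : Fin n, x j * (U (EuclideanSpace.single j 1)) i := by
        rw [map_sum, map_sum]
        refine Finset.sum_congr rfl fun j _ => ?_
        rw [_root_.map_smul, _root_.map_smul]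
        rfl
    _ = ∑ j : Fin n, (U (EuclideanSpace.single j 1)) i * x j := by
        congr 1; funext j; ring

lemma eval_linPoly (U : EuclideanSpace ℝ (Fin n) ≃ₗᵢ[ℝ] EuclideanSpace ℝ (Fin n))
    (i : Fin n) (x : Sph n) :
    MvPolynomial.eval (fun j => (x : EuclideanSpace ℝ (Fin n)) j) (linPoly U i)
      = (U (x : EuclideanSpace ℝ (Fin n))) i := by
  rw [apply_coord_eq_sum]
  simp [linPoly]

lemma polyEval_comp_sphMap (U : EuclideanSpace ℝ (Fin n) ≃ₗᵢ[ℝ] EuclideanSpace ℝ (Fin n))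
    (p : MvPolynomial (Fin n) ℝ) (x : Sph n) :
    polyEval (MvPolynomial.bind₁ (linPoly U) p) x = polyEval p (sphMap U x) := by
  unfold polyEval
  have harg : (fun i => MvPolynomial.aeval (fun j => (x : EuclideanSpace ℝ (Fin n)) j)
      (linPoly U i)) = fun i => (sphMap U x : EuclideanSpace ℝ (Fin n)) i := by
    funext i
    rw [aeval_eq_eval, eval_linPoly]
    rfl
  rw [← aeval_eq_eval, MvPolynomial.aeval_bind₁, harg, aeval_eq_eval]

lemma comp_sphMap_mem_Wsub (U : EuclideanSpace ℝ (Fin n) ≃ₗᵢ[ℝ] EuclideanSpace ℝ (Fin n))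
    {f : Sph n → ℝ} (hf : f ∈ Wsub n t) : (f ∘ sphMap U) ∈ Wsub n t := by
  obtain ⟨p, hp, rfl⟩ := mem_Wsub_iff.mp hf
  refine mem_Wsub_iff.mpr ⟨MvPolynomial.bind₁ (linPoly U) p, ?_, ?_⟩
  · have := hp.aeval (linPoly U) (linPoly_isHomogeneous U)
    rw [one_mul] at this
    rwa [MvPolynomial.aeval_eq_bind₁] at this
  · funext x
    exact polyEval_comp_sphMap U p x

end Stmt11Aux
namespace Stmt11Aux

variable {n t : ℕ}

lemma integrable_of_cont {f : Sph n → ℝ} (hf : Continuous f) (μ : Measure (Sph n))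
    [IsFiniteMeasure μ] : Integrable f μ :=
  hf.integrable_of_hasCompactSupport (HasCompactSupport.of_compactSpace f)

lemma openPos (σ : Measure (Sph n)) [IsProbabilityMeasure σ]
    (hσ : IsRotationInvariant σ) : σ.IsOpenPosMeasure := by
  constructor
  intro V hV hne hV0
  obtain ⟨v, hv⟩ := hne
  obtain ⟨r, hr, hball⟩ := Metric.isOpen_iff.mp hV v hv
  have hb0 : σ (Metric.ball v r) = 0 := measure_mono_null hball hV0
  have hall : ∀ y : Sph n, σ (Metric.ball y r) = 0 := by
    intro y
    obtain ⟨U, hU⟩ := exists_sphMap_eq v y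
    have hpre : sphMap U ⁻¹' Metric.ball y r = Metric.ball v r := by
      ext a
      have hd : dist (sphMap U a) y = dist a v := by
        rw [← hU, Subtype.dist_eq, Subtype.dist_eq]
        exact U.dist_map _ _
      simp only [Set.mem_preimage, Metric.mem_ball, hd]
    calc σ (Metric.ball y r)
        = (Measure.map (sphMap U) σ) (Metric.ball y r) := by rw [hσ U]
      _ = σ (sphMap U ⁻¹' Metric.ball y r) :=
          Measure.map_apply (sphMap_continuous U).measurable measurableSet_ball
      _ = 0 := by rw [hpre]; exact hb0
  have hcov : (Set.univ : Set (Sph n)) ⊆ ⋃ y : Sph n, Metric.ball y r :=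
    fun a _ => Set.mem_iUnion.mpr ⟨a, Metric.mem_ball_self hr⟩
  obtain ⟨s, hs⟩ := isCompact_univ.elim_finite_subcover
    (fun y : Sph n => Metric.ball y r) (fun _ => Metric.isOpen_ball) hcov
  have h0 : σ (⋃ y ∈ s, Metric.ball y r) = 0 :=
    (measure_biUnion_null_iff s.countable_toSet).mpr fun y _ => hall y
  have : σ Set.univ = 0 := measure_mono_null hs h0
  rw [measure_univ] at this
  exact one_ne_zero this

lemma sphMap_neg_coe (x : Sph n) :
    ((sphMap (LinearIsometryEquiv.neg ℝ (E := EuclideanSpace ℝ (Fin n))) x :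
      Sph n) : EuclideanSpace ℝ (Fin n)) = -(x : EuclideanSpace ℝ (Fin n)) := rfl

end Stmt11Aux
namespace Stmt11Aux
open MvPolynomial

variable {n t : ℕ}

/-- Type synonym for `Wsub` carrying no topological instances. -/
def WT (n t : ℕ) : Type := ↥(Wsub n t)

instance : AddCommGroup (WT n t) := inferInstanceAs (AddCommGroup ↥(Wsub n t))
instance : Module ℝ (WT n t) := inferInstanceAs (Module ℝ ↥(Wsub n t))
instance : FiniteDimensional ℝ (WT n t) :=
  inferInstanceAs (FiniteDimensional ℝ ↥(Wsub n t))

def toSub (n t : ℕ) : WT n t ≃ₗ[ℝ] ↥(Wsub n t) := LinearEquiv.refl ℝ ↥(Wsub n t)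

/-- The underlying function of an element of `WT`, as a linear map. -/
def fnL (n t : ℕ) : WT n t →ₗ[ℝ] (Sph n → ℝ) :=
  (Wsub n t).subtype.comp (toSub n t).toLinearMap

lemma fn_mem (f : WT n t) : fnL n t f ∈ Wsub n t := (toSub n t f).2

lemma fn_cont (f : WT n t) : Continuous (fnL n t f) := continuous_of_mem_Wsub (fn_mem f)

lemma fn_inj : Function.Injective (fnL n t) := by
  intro f g h
  apply (toSub n t).injective
  exact Subtype.ext h

lemma finrank_WT (hn : 1 ≤ n) (ht : 1 ≤ t) :
    Module.finrank ℝ (WT n t) = (n + t - 1).choose t := by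
  rw [(toSub n t).finrank_eq]
  exact finrank_Wsub hn ht

end Stmt11Aux
namespace Stmt11Aux
open MvPolynomial
open scoped RealInnerProductSpace

variable {n t : ℕ}

set_option maxHeartbeats 1000000 in
lemma weight_le (hn : 2 ≤ n) (ht : 1 ≤ t)
    (σ : Measure (Sph n)) [IsProbabilityMeasure σ] (hσ : IsRotationInvariant σ)
    (ν : Measure (Sph n)) (hν : IsCubature (2 * t + 1) σ ν) (z : Sph n) :
    (ν {z}).toReal ≤ 1 / (2 * ((n + t - 1).choose t : ℝ)) := by
  classical
  obtain ⟨hprob, hfin, hcub⟩ := hν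
  haveI := hprob
  haveI : σ.IsOpenPosMeasure := openPos σ hσ
  have intW : ∀ f g : WT n t,
      Integrable (fun x => fnL n t f x * fnL n t g x) σ :=
    fun f g => integrable_of_cont ((fn_cont f).mul (fn_cont g)) σ
  letI core : InnerProductSpace.Core ℝ (WT n t) :=
    { inner := fun f g => ∫ x, fnL n t f x * fnL n t g x ∂σ
      conj_inner_symm := fun f g => by
        simp only [starRingEnd_apply, star_trivial]
        simp_rw [mul_comm]
      re_inner_nonneg := fun f => by
        simp only [RCLike.re_to_real]
        exact integral_nonneg fun x => mul_self_nonneg _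
      add_left := fun f g h => by
        simp only [map_add, Pi.add_apply, add_mul]
        exact integral_add (intW f h) (intW g h)
      smul_left := fun f g r => by
        simp only [starRingEnd_apply, star_trivial]
        rw [← integral_const_mul]
        congr 1
        funext x
        rw [_root_.map_smul]
        simp [mul_assoc]
      definite := fun f hf => by
        have hnn : (0 : Sph n → ℝ) ≤ fun x => fnL n t f x * fnL n t f x :=
          fun x => mul_self_nonneg _
        have h0 : (fun x => fnL n t f x * fnL n t f x) =ᵐ[σ] 0 :=
          (integral_eq_zero_iff_of_nonneg hnn (intW f f)).mp hf
        have heq : (fun x => fnL n t f x * fnL n t f x) = (0 : Sph n → ℝ) :=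
          (Continuous.ae_eq_iff_eq σ ((fn_cont f).mul (fn_cont f)) continuous_const).mp h0
        apply fn_inj
        rw [map_zero]
        funext x
        have := congrFun heq x
        simpa [mul_self_eq_zero] using this }
  letI : NormedAddCommGroup (WT n t) := core.toNormedAddCommGroup
  letI : InnerProductSpace ℝ (WT n t) := InnerProductSpace.ofCore core.toCore
  have hinner : ∀ f g : WT n t,
      ⟪f, g⟫ = ∫ x, fnL n t f x * fnL n t g x ∂σ := fun f g => rfl
  haveI : CompleteSpace (WT n t) := FiniteDimensional.complete ℝ _
  set D := Module.finrank ℝ (WT n t) with hD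
  set b := stdOrthonormalBasis ℝ (WT n t) with hb
  -- Riesz representation of the evaluation functionals
  have hv : ∀ x : Sph n, ∃ v : WT n t, ∀ f : WT n t, ⟪v, f⟫ = fnL n t f x := by
    intro x
    refine ⟨(InnerProductSpace.toDual ℝ (WT n t)).symm
      (LinearMap.toContinuousLinearMap
        { toFun := fun f : WT n t => fnL n t f x
          map_add' := fun f g => by
            show fnL n t (f + g) x = fnL n t f x + fnL n t g x
            rw [map_add]; rfl
          map_smul' := fun c f => by
            show fnL n t (c • f) x = c * fnL n t f x
            rw [_root_.map_smul]; rfl }), fun f => ?_⟩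
    rw [InnerProductSpace.toDual_symm_apply]
    simp
  choose v hv using hv
  have key : ∀ (c : OrthonormalBasis (Fin D) ℝ (WT n t)) (x : Sph n),
      ∑ i, (fnL n t (c i) x) ^ 2 = ⟪v x, v x⟫ := by
    intro c x
    have h := c.sum_inner_mul_inner (v x) (v x)
    rw [← h]
    refine Finset.sum_congr rfl fun i _ => ?_
    have h1 : ⟪v x, c i⟫ = fnL n t (c i) x := hv x (c i)
    have h2 : ⟪c i, v x⟫ = fnL n t (c i) x := by rw [real_inner_comm]; exact h1
    rw [h1, h2]
    ring
  set g : Sph n → ℝ := fun x => ⟪v x, v x⟫ with hg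
  have hg_basis : ∀ x, g x = ∑ i, (fnL n t (b i) x) ^ 2 := fun x => (key b x).symm
  -- invariance of σ-integrals
  have hIntInv : ∀ (U : EuclideanSpace ℝ (Fin n) ≃ₗᵢ[ℝ] EuclideanSpace ℝ (Fin n))
      (f : Sph n → ℝ), Continuous f →
      ∫ x, f x ∂σ = ∫ x, f (sphMap U x) ∂σ := by
    intro U f hf
    conv_lhs => rw [← hσ U]
    exact integral_map (sphMap_continuous U).aemeasurable
      ((hσ U).symm ▸ hf.aestronglyMeasurable)
  -- the isometric action on W
  have hsphMap_comp : ∀ (U : EuclideanSpace ℝ (Fin n) ≃ₗᵢ[ℝ] EuclideanSpace ℝ (Fin n))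
      (x : Sph n), sphMap U (sphMap U.symm x) = x := by
    intro U x
    apply Subtype.ext
    simp [sphMap]
  have hsphMap_comp' : ∀ (U : EuclideanSpace ℝ (Fin n) ≃ₗᵢ[ℝ] EuclideanSpace ℝ (Fin n))
      (x : Sph n), sphMap U.symm (sphMap U x) = x := by
    intro U x
    apply Subtype.ext
    simp [sphMap]
  let T : (EuclideanSpace ℝ (Fin n) ≃ₗᵢ[ℝ] EuclideanSpace ℝ (Fin n)) →
      (WT n t →ₗ[ℝ] WT n t) := fun U =>
    { toFun := fun f => (toSub n t).symm ⟨fnL n t f ∘ sphMap U,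
        comp_sphMap_mem_Wsub U (fn_mem f)⟩
      map_add' := fun f g => by
        apply (toSub n t).injective
        apply Subtype.ext
        rw [map_add (toSub n t)]
        funext x
        show (fnL n t (f + g)) (sphMap U x) = _
        rw [map_add]
        rfl
      map_smul' := fun c f => by
        apply (toSub n t).injective
        apply Subtype.ext
        rw [map_smulₛₗ (toSub n t)]
        funext x
        show (fnL n t (c • f)) (sphMap U x) = _
        rw [_root_.map_smul]
        rfl }
  have hT_fn : ∀ U f x, fnL n t (T U f) x = fnL n t f (sphMap U x) := fun U f x => rfl
  have hTT : ∀ U f, T U.symm (T U f) = f := by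
    intro U f
    apply fn_inj
    funext x
    rw [hT_fn, hT_fn, hsphMap_comp]
  have hTT' : ∀ U f, T U (T U.symm f) = f := by
    intro U f
    apply fn_inj
    funext x
    rw [hT_fn, hT_fn, hsphMap_comp']
  let Teq : (EuclideanSpace ℝ (Fin n) ≃ₗᵢ[ℝ] EuclideanSpace ℝ (Fin n)) →
      (WT n t ≃ₗ[ℝ] WT n t) := fun U =>
    LinearEquiv.ofLinear (T U) (T U.symm)
      (LinearMap.ext fun f => hTT' U f) (LinearMap.ext fun f => hTT U f)
  have hTinner : ∀ (U : EuclideanSpace ℝ (Fin n) ≃ₗᵢ[ℝ] EuclideanSpace ℝ (Fin n))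
      (f g : WT n t), ⟪Teq U f, Teq U g⟫ = ⟪f, g⟫ := by
    intro U f g
    rw [hinner, hinner]
    have hc : ∀ x : Sph n, fnL n t (Teq U f) x * fnL n t (Teq U g) x
        = fnL n t f (sphMap U x) * fnL n t g (sphMap U x) := fun x => rfl
    simp_rw [hc]
    exact (hIntInv U _ ((fn_cont f).mul (fn_cont g))).symm
  have hg_inv : ∀ (U : EuclideanSpace ℝ (Fin n) ≃ₗᵢ[ℝ] EuclideanSpace ℝ (Fin n))
      (x : Sph n), g (sphMap U x) = g x := by
    intro U x
    calc g (sphMap U x) = ∑ i, (fnL n t (b i) (sphMap U x)) ^ 2 := hg_basis _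
      _ = ∑ i, (fnL n t ((b.map ((Teq U).isometryOfInner (hTinner U))) i) x) ^ 2 := by
          refine Finset.sum_congr rfl fun i _ => ?_
          rw [OrthonormalBasis.map_apply]
          rfl
      _ = ⟪v x, v x⟫ := key _ x
      _ = g x := rfl
  have hg_const : ∀ x y : Sph n, g x = g y := by
    intro x y
    obtain ⟨U, hU⟩ := exists_sphMap_eq x y
    rw [← hU, hg_inv U x]
  -- ∫ g = D
  have hint_b : ∀ i, ∫ x, (fnL n t (b i) x) ^ 2 ∂σ = 1 := by
    intro i
    have h2 : ∫ x, (fnL n t (b i) x) ^ 2 ∂σ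
        = ∫ x, fnL n t (b i) x * fnL n t (b i) x ∂σ := by
      congr 1
      funext x
      ring
    rw [h2, ← hinner, real_inner_self_eq_norm_mul_norm, b.orthonormal.1 i, one_mul]
  have hint_g : ∫ x, g x ∂σ = (D : ℝ) := by
    have h2 : ∫ x, g x ∂σ = ∫ x, ∑ i, (fnL n t (b i) x) ^ 2 ∂σ := by
      congr 1
      funext x
      exact hg_basis x
    rw [h2, integral_finset_sum]
    · simp_rw [hint_b]
      simp [hD]
    · intro i _
      exact integrable_of_cont ((fn_cont (b i)).pow 2) σ
  have hgval : ∀ x : Sph n, g x = (D : ℝ) := by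
    intro x
    have hgc : g = fun _ => g x := funext fun y => hg_const y x
    have h3 : ∫ y, g y ∂σ = g x := by
      rw [hgc, integral_const]
      simp
    rw [← h3, hint_g]
  -- the kernel element at z
  set u : WT n t := ∑ i, (fnL n t (b i) z) • b i with hu
  have hu_fn : ∀ x, fnL n t u x = ∑ i, fnL n t (b i) z * fnL n t (b i) x := by
    intro x
    rw [hu, map_sum, Finset.sum_apply]
    refine Finset.sum_congr rfl fun i _ => ?_
    rw [_root_.map_smul]
    rfl
  have hu_z : fnL n t u z = g z := by
    rw [hu_fn, hg_basis]
    refine Finset.sum_congr rfl fun i _ => ?_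
    ring
  have hu_inner : ⟪u, u⟫ = g z := by
    have horth := b.orthonormal
    calc ⟪u, u⟫ = ∑ i, ⟪(fnL n t (b i) z) • b i, u⟫ := by rw [hu, sum_inner]
      _ = ∑ i, (fnL n t (b i) z) * ⟪b i, u⟫ := by
          refine Finset.sum_congr rfl fun i _ => ?_
          rw [real_inner_smul_left]
      _ = ∑ i, (fnL n t (b i) z) * (fnL n t (b i) z) := by
          refine Finset.sum_congr rfl fun i _ => ?_
          congr 1
          rw [hu]
          exact horth.inner_right_fintype _ i
      _ = g z := by
          rw [hg_basis]
          refine Finset.sum_congr rfl fun i _ => ?_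
          ring
  obtain ⟨pu, hpu_hom, hpu_eval⟩ := mem_Wsub_iff.mp (fn_mem u)
  have hcoordc : ∀ j, Continuous fun x : Sph n => (x : EuclideanSpace ℝ (Fin n)) j := by
    intro j
    have hc : Continuous fun y : EuclideanSpace ℝ (Fin n) => y j := by
      simpa using (EuclideanSpace.proj (𝕜 := ℝ) (ι := Fin n) j).continuous
    exact hc.comp continuous_subtype_val
  -- the test polynomial
  set lz : MvPolynomial (Fin n) ℝ :=
    ∑ j : Fin n, MvPolynomial.C ((z : EuclideanSpace ℝ (Fin n)) j) * MvPolynomial.X j with hlz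
  set q : MvPolynomial (Fin n) ℝ := (1 + lz) * pu ^ 2 with hq
  have hq_eval : ∀ x : Sph n, polyEval q x
      = (1 + ∑ j, (z : EuclideanSpace ℝ (Fin n)) j * (x : EuclideanSpace ℝ (Fin n)) j)
        * (fnL n t u x) ^ 2 := by
    intro x
    rw [hq]
    show MvPolynomial.eval _ ((1 + lz) * pu ^ 2) = _
    rw [map_mul, map_add, map_one, map_pow]
    have h1 : MvPolynomial.eval (fun i => (x : EuclideanSpace ℝ (Fin n)) i) lz
        = ∑ j, (z : EuclideanSpace ℝ (Fin n)) j * (x : EuclideanSpace ℝ (Fin n)) j := by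
      rw [hlz]
      simp
    have h2 : MvPolynomial.eval (fun i => (x : EuclideanSpace ℝ (Fin n)) i) pu
        = fnL n t u x := by
      have := congrFun hpu_eval x
      exact this
    rw [h1, h2]
  have hdeg : q.totalDegree ≤ 2 * t + 1 := by
    rw [hq]
    refine le_trans (MvPolynomial.totalDegree_mul _ _) ?_
    have h1 : (1 + lz).totalDegree ≤ 1 := by
      refine le_trans (MvPolynomial.totalDegree_add _ _) ?_
      rw [max_le_iff]
      constructor
      · simp [MvPolynomial.totalDegree_one]
      · rw [hlz]
        refine le_trans (MvPolynomial.totalDegree_finset_sum _ _) ?_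
        refine Finset.sup_le fun j _ => ?_
        refine le_trans (MvPolynomial.totalDegree_mul _ _) ?_
        simp [MvPolynomial.totalDegree_C, MvPolynomial.totalDegree_X]
    have h2 : (pu ^ 2).totalDegree ≤ 2 * t := by
      have h3 := (hpu_hom.pow 2).totalDegree_le
      omega
    omega
  -- inner product with z on the sphere
  have hip_inner : ∀ x : Sph n,
      ∑ j, (z : EuclideanSpace ℝ (Fin n)) j * (x : EuclideanSpace ℝ (Fin n)) j
        = ⟪(z : EuclideanSpace ℝ (Fin n)), (x : EuclideanSpace ℝ (Fin n))⟫ := by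
    intro x
    rw [PiLp.inner_apply]
    simp [RCLike.inner_apply, conj_trivial]
    exact Finset.sum_congr rfl fun j _ => mul_comm _ _
  have hnorm1 : ∀ x : Sph n, ‖(x : EuclideanSpace ℝ (Fin n))‖ = 1 := fun x =>
    mem_sphere_zero_iff_norm.mp x.2
  have hip_le : ∀ x : Sph n,
      |∑ j, (z : EuclideanSpace ℝ (Fin n)) j * (x : EuclideanSpace ℝ (Fin n)) j| ≤ 1 := by
    intro x
    rw [hip_inner]
    have h := abs_real_inner_le_norm (z : EuclideanSpace ℝ (Fin n)) (x : EuclideanSpace ℝ (Fin n))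
    rwa [hnorm1 z, hnorm1 x, one_mul] at h
  have hq_nonneg : ∀ x : Sph n, 0 ≤ polyEval q x := by
    intro x
    rw [hq_eval]
    have h := abs_le.mp (hip_le x)
    have : (0:ℝ) ≤ 1 + ∑ j, (z : EuclideanSpace ℝ (Fin n)) j * (x : EuclideanSpace ℝ (Fin n)) j := by
      linarith [h.1]
    exact mul_nonneg this (sq_nonneg _)
  have hq_z : polyEval q z = 2 * (g z) ^ 2 := by
    rw [hq_eval z, hu_z]
    have hzz : ∑ j, (z : EuclideanSpace ℝ (Fin n)) j * (z : EuclideanSpace ℝ (Fin n)) j = 1 := by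
      rw [hip_inner z, real_inner_self_eq_norm_mul_norm, hnorm1 z, one_mul]
    rw [hzz]
    ring
  -- the ν side
  have hq_int_ν : Integrable (polyEval q) ν := integrable_of_cont (continuous_polyEval q) ν
  have hν_lb : (ν {z}).toReal * polyEval q z ≤ ∫ x, polyEval q x ∂ν := by
    have hsing : ∫ x in ({z} : Set (Sph n)), polyEval q x ∂ν
        = (ν {z}).toReal * polyEval q z := by
      rw [integral_singleton]
      simp [smul_eq_mul, Measure.real]
    rw [← hsing]
    exact setIntegral_le_integral hq_int_ν (ae_of_all _ hq_nonneg)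
  -- the σ side
  have hcont_u : Continuous (fnL n t u) := fn_cont u
  have hcont_ip : Continuous fun x : Sph n =>
      ∑ j, (z : EuclideanSpace ℝ (Fin n)) j * (x : EuclideanSpace ℝ (Fin n)) j :=
    continuous_finset_sum _ fun j _ => continuous_const.mul (hcoordc j)
  have hint1 : Integrable (fun x => (fnL n t u x) ^ 2) σ :=
    integrable_of_cont (hcont_u.pow 2) σ
  have hint2 : Integrable (fun x : Sph n =>
      (∑ j, (z : EuclideanSpace ℝ (Fin n)) j * (x : EuclideanSpace ℝ (Fin n)) j)
        * (fnL n t u x) ^ 2) σ :=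
    integrable_of_cont (hcont_ip.mul (hcont_u.pow 2)) σ
  have h5 : ∫ x, (fnL n t u x) ^ 2 ∂σ = g z := by
    have h5a : ∫ x, (fnL n t u x) ^ 2 ∂σ = ∫ x, fnL n t u x * fnL n t u x ∂σ := by
      congr 1
      funext x
      ring
    rw [h5a, ← hinner, hu_inner]
  have h6 : ∫ x, (∑ j, (z : EuclideanSpace ℝ (Fin n)) j * (x : EuclideanSpace ℝ (Fin n)) j)
      * (fnL n t u x) ^ 2 ∂σ = 0 := by
    set ψ : Sph n → ℝ := fun x =>
      (∑ j, (z : EuclideanSpace ℝ (Fin n)) j * (x : EuclideanSpace ℝ (Fin n)) j)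
        * (fnL n t u x) ^ 2 with hψ
    have hψcont : Continuous ψ := hcont_ip.mul (hcont_u.pow 2)
    set Uneg := LinearIsometryEquiv.neg ℝ (E := EuclideanSpace ℝ (Fin n)) with hUneg
    have hcoordneg : ∀ (x : Sph n) (j : Fin n),
        ((sphMap Uneg x : Sph n) : EuclideanSpace ℝ (Fin n)) j
          = -((x : EuclideanSpace ℝ (Fin n)) j) := by
      intro x j
      rw [hUneg, sphMap_neg_coe]
      rfl
    have hfe : ∀ x : Sph n, fnL n t u (sphMap Uneg x) = (-1 : ℝ) ^ t * fnL n t u x := by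
      intro x
      have e1 : fnL n t u (sphMap Uneg x) = polyEval pu (sphMap Uneg x) :=
        (congrFun hpu_eval (sphMap Uneg x)).symm
      have e2 : fnL n t u x = polyEval pu x := (congrFun hpu_eval x).symm
      rw [e1, e2]
      show MvPolynomial.eval (fun i => ((sphMap Uneg x : Sph n) : EuclideanSpace ℝ (Fin n)) i) pu
        = (-1 : ℝ) ^ t * MvPolynomial.eval (fun i => (x : EuclideanSpace ℝ (Fin n)) i) pu
      have e3 : (fun i => ((sphMap Uneg x : Sph n) : EuclideanSpace ℝ (Fin n)) i)
          = fun i => (-1 : ℝ) * (x : EuclideanSpace ℝ (Fin n)) i := by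
        funext i
        rw [hcoordneg]
        ring
      rw [e3]
      exact eval_homog hpu_hom (-1) _
    have hψodd : ∀ x : Sph n, ψ (sphMap Uneg x) = -ψ x := by
      intro x
      rw [hψ]
      simp only []
      rw [hfe]
      have e4 : ∑ j, (z : EuclideanSpace ℝ (Fin n)) j
          * ((sphMap Uneg x : Sph n) : EuclideanSpace ℝ (Fin n)) j
          = -∑ j, (z : EuclideanSpace ℝ (Fin n)) j * (x : EuclideanSpace ℝ (Fin n)) j := by
        rw [← Finset.sum_neg_distrib]
        refine Finset.sum_congr rfl fun j _ => ?_
        rw [hcoordneg]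
        ring
      rw [e4]
      have e5 : ((-1 : ℝ) ^ t) ^ 2 = 1 := by
        rw [← pow_mul, mul_comm, pow_mul, neg_one_sq, one_pow]
      rw [mul_pow]
      rw [e5]
      ring
    have h7 : ∫ x, ψ x ∂σ = ∫ x, ψ (sphMap Uneg x) ∂σ := hIntInv Uneg ψ hψcont
    have h8 : ∫ x, ψ (sphMap Uneg x) ∂σ = -∫ x, ψ x ∂σ := by
      have : (fun x => ψ (sphMap Uneg x)) = fun x => -ψ x := funext hψodd
      rw [this, integral_neg]
    have : ∫ x, ψ x ∂σ = 0 := by linarith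
    exact this
  have hσ_val : ∫ x, polyEval q x ∂σ = g z := by
    have hrepr : polyEval q = fun x =>
        (fnL n t u x) ^ 2
          + (∑ j, (z : EuclideanSpace ℝ (Fin n)) j * (x : EuclideanSpace ℝ (Fin n)) j)
            * (fnL n t u x) ^ 2 := by
      funext x
      rw [hq_eval]
      ring
    rw [hrepr, integral_add hint1 hint2, h5, h6, add_zero]
  -- combine everything
  have hcubq := hcub q hdeg
  have final : (ν {z}).toReal * (2 * (g z) ^ 2) ≤ g z := by
    calc (ν {z}).toReal * (2 * (g z) ^ 2) = (ν {z}).toReal * polyEval q z := by rw [hq_z]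
      _ ≤ ∫ x, polyEval q x ∂ν := hν_lb
      _ = ∫ x, polyEval q x ∂σ := hcubq
      _ = g z := hσ_val
  have hDr : g z = ((n + t - 1).choose t : ℝ) := by
    rw [hgval z, hD, finrank_WT (le_trans one_le_two hn) ht]
  rw [hDr] at final
  have hCpos : (0 : ℝ) < ((n + t - 1).choose t : ℝ) := by
    have : 0 < (n + t - 1).choose t := Nat.choose_pos (by omega)
    exact_mod_cast this
  rw [le_div_iff₀ (by positivity)]
  set C := ((n + t - 1).choose t : ℝ) with hC
  have h9 : (ν {z}).toReal * (2 * C) * C ≤ 1 * C := by nlinarith [final]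
  exact le_of_mul_le_mul_right h9 hCpos


end Stmt11Aux
theorem stmt11 (n t : ℕ) (hn : 2 ≤ n) (ht : 1 ≤ t)
    (σ : Measure (Sph n)) [IsProbabilityMeasure σ] (hσ : IsRotationInvariant σ)
    (θ : ℝ) (hθ : θ ∈ Set.Ioo (0 : ℝ) 1)
    (ν : Measure (Sph n)) (hν : IsCubature (2 * t + 1) σ ν) :
    ((2 * (n + t - 1).choose (n - 1) : ℕ) : ℝ) ^ (1 - θ) ≤ thetaNorm ν θ := by
  classical
  obtain ⟨hθ0, hθ1⟩ := hθ
  haveI := hν.1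
  obtain ⟨s, hs⟩ := hν.2.1
  -- symmetry of the binomial coefficient
  have hsym : (n + t - 1).choose (n - 1) = (n + t - 1).choose t := by
    have h1 : n - 1 = (n + t - 1) - t := by omega
    rw [h1]
    exact Nat.choose_symm (by omega)
  have hNr : ((2 * (n + t - 1).choose (n - 1) : ℕ) : ℝ)
      = 2 * ((n + t - 1).choose t : ℝ) := by
    rw [hsym]
    push_cast
    ring
  set N : ℝ := 2 * ((n + t - 1).choose t : ℝ) with hN
  have hNpos : 0 < N := by
    have : 0 < (n + t - 1).choose t := Nat.choose_pos (by omega)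
    rw [hN]
    positivity
  -- the weight bound
  have hb : ∀ u : Sph n, (ν {u}).toReal ≤ 1 / N :=
    fun u => Stmt11Aux.weight_le hn ht σ hσ ν hν u
  -- measures of points off the support vanish
  have hzero : ∀ u : Sph n, u ∉ s → ν {u} = 0 := by
    intro u hu
    refine measure_mono_null ?_ hs
    intro x hx
    rw [Set.mem_singleton_iff] at hx
    subst hx
    simpa using hu
  -- thetaNorm is a finite sum
  have htsum : thetaNorm ν θ = ∑ u ∈ s, (ν {u}).toReal ^ θ := by
    unfold thetaNorm
    refine tsum_eq_sum fun u hu => ?_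
    rw [hzero u hu]
    simp [Real.zero_rpow hθ0.ne']
  -- the weights sum to 1
  have hmeas_s : MeasurableSet (↑s : Set (Sph n)) := s.finite_toSet.measurableSet
  have hν_s : ν (↑s : Set (Sph n)) = 1 := by
    have h1 := measure_add_measure_compl (μ := ν) hmeas_s
    rw [hs, add_zero, measure_univ] at h1
    exact h1
  have hsum_singles : ν (↑s : Set (Sph n)) = ∑ u ∈ s, ν {u} := by
    have hd : (↑s : Set (Sph n)) = ⋃ u ∈ s, ({u} : Set (Sph n)) := by
      ext x
      simp only [Set.mem_iUnion, Set.mem_singleton_iff, Finset.mem_coe]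
      constructor
      · intro hx
        exact ⟨x, hx, rfl⟩
      · rintro ⟨u, hu, rfl⟩
        exact hu
    rw [hd]
    exact measure_biUnion_finset
      (fun a _ b _ hab => by simp [Set.disjoint_singleton, hab])
      (fun a _ => measurableSet_singleton a)
  have hsum1 : ∑ u ∈ s, (ν {u}).toReal = 1 := by
    have h2 : (∑ u ∈ s, ν {u}).toReal = 1 := by
      rw [← hsum_singles, hν_s]
      rfl
    rw [ENNReal.toReal_sum (fun a _ => measure_ne_top ν _)] at h2
    exact h2
  -- per-term bound
  have hterm : ∀ u : Sph n, (ν {u}).toReal * N ^ (1 - θ) ≤ (ν {u}).toReal ^ θ := by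
    intro u
    set a : ℝ := (ν {u}).toReal with ha
    have ha0 : 0 ≤ a := ENNReal.toReal_nonneg
    rcases eq_or_lt_of_le ha0 with h | h
    · rw [← h]
      simp only [zero_mul]
      exact Real.rpow_nonneg (le_refl 0) θ
    · have key1 : (1 / N) ^ (θ - 1) ≤ a ^ (θ - 1) :=
        Real.rpow_le_rpow_of_nonpos h (hb u) (by linarith)
      have key2 : (1 / N) ^ (θ - 1) = N ^ (1 - θ) := by
        rw [Real.div_rpow (by norm_num) hNpos.le, Real.one_rpow, one_div,
          ← Real.rpow_neg hNpos.le]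
        congr 1
        ring
      have key3 : a ^ θ = a * a ^ (θ - 1) := by
        rw [show θ = 1 + (θ - 1) by ring, Real.rpow_add h, Real.rpow_one]
        ring_nf
      rw [key3]
      rw [← key2]
      exact mul_le_mul_of_nonneg_left key1 ha0
  -- sum up
  calc ((2 * (n + t - 1).choose (n - 1) : ℕ) : ℝ) ^ (1 - θ)
      = N ^ (1 - θ) := by rw [hNr]
    _ = (∑ u ∈ s, (ν {u}).toReal) * N ^ (1 - θ) := by rw [hsum1, one_mul]
    _ = ∑ u ∈ s, (ν {u}).toReal * N ^ (1 - θ) := by rw [Finset.sum_mul]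
    _ ≤ ∑ u ∈ s, (ν {u}).toReal ^ θ := Finset.sum_le_sum fun u _ => hterm u
    _ = thetaNorm ν θ := htsum.symm
end
end

section
/- For every integer n ≥ 2 there exists a constant C > 0 such that for every integer t ≥ 1 and every θ ∈ (0,1) there exists a cubature formula ν of strength t on S^{n-1} with ‖ν‖_θ ≤ (C·t^{n−1})^{1−θ}. -/
open MeasureTheory Metric
open scoped ENNReal

noncomputable section

open Set


private lemma sum_extend_emb {ι κ M : Type*} [Fintype ι] [Fintype κ] [AddCommMonoid M]
    (e : ι ↪ κ) (f : ι → M) :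
    ∑ j : κ, Function.extend e f 0 j = ∑ i : ι, f i := by
  classical
  rw [← Finset.sum_subset (Finset.subset_univ (Finset.univ.image e))
    (fun j _ hj => by
      refine Function.extend_apply' _ _ _ ?_
      rintro ⟨i, rfl⟩
      exact hj (Finset.mem_image_of_mem e (Finset.mem_univ i)))]
  rw [Finset.sum_image (fun a _ b _ hab => e.injective hab)]
  exact Finset.sum_congr rfl fun i _ => e.injective.extend_apply f 0 i

private lemma isCompact_convexHull' {E : Type*} [NormedAddCommGroup E] [NormedSpace ℝ E]
    [FiniteDimensional ℝ E] {s : Set E} (hs : IsCompact s) :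
    IsCompact (convexHull ℝ s) := by
  classical
  rcases s.eq_empty_or_nonempty with rfl | ⟨x₀, hx₀⟩
  · simpa using isCompact_empty
  set d := Module.finrank ℝ E with hd
  set Φ : ((Fin (d+1) → ℝ) × (Fin (d+1) → E)) → E := fun p => ∑ j, p.1 j • p.2 j with hPhi
  have hΦ : Continuous Φ := continuous_finset_sum _ fun j _ =>
    (((continuous_apply j).comp continuous_fst).smul ((continuous_apply j).comp continuous_snd))
  have himage : convexHull ℝ s =
      Φ '' ((stdSimplex ℝ (Fin (d+1))) ×ˢ (Set.univ.pi fun _ => s)) := by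
    apply Subset.antisymm
    · intro x hx
      obtain ⟨ι, hι, z, w, hzs, hzind, hw, hw1, hwz⟩ := eq_pos_convex_span_of_mem_convexHull hx
      letI := hι
      have hcard : Fintype.card ι ≤ d + 1 := by
        refine hzind.card_le_finrank_succ.trans ?_
        exact Nat.add_le_add_right (Submodule.finrank_le _) 1
      obtain ⟨e⟩ : Nonempty (ι ↪ Fin (d+1)) := by
        refine Function.Embedding.nonempty_of_card_le ?_
        simpa using hcard
      set w2 : Fin (d+1) → ℝ := Function.extend e w 0 with hw2
      set z2 : Fin (d+1) → E := Function.extend e z (fun _ => x₀) with hz2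
      refine ⟨(w2, z2), ⟨⟨fun j => ?_, ?_⟩, fun j _ => ?_⟩, ?_⟩
      · show 0 ≤ w2 j
        rcases em (∃ i, e i = j) with ⟨i, rfl⟩ | h
        · rw [hw2, e.injective.extend_apply]; exact (hw _).le
        · rw [hw2, Function.extend_apply' _ _ _ h]; exact le_rfl
      · exact (sum_extend_emb e w).trans hw1
      · show z2 j ∈ s
        rcases em (∃ i, e i = j) with ⟨i, rfl⟩ | h
        · rw [hz2, e.injective.extend_apply]; exact hzs ⟨_, rfl⟩
        · rw [hz2, Function.extend_apply' _ _ _ h]; exact hx₀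
      · have hptw : ∀ j, w2 j • z2 j = Function.extend e (fun i => w i • z i) 0 j := by
          intro j
          rcases em (∃ i, e i = j) with ⟨i, rfl⟩ | h
          · rw [hw2, hz2, e.injective.extend_apply, e.injective.extend_apply,
              e.injective.extend_apply]
          · rw [hw2, hz2, Function.extend_apply' _ _ _ h, Function.extend_apply' _ _ _ h,
              Function.extend_apply' _ _ _ h]
            simp
        show (∑ j, w2 j • z2 j) = x
        rw [Finset.sum_congr rfl fun j _ => hptw j]
        exact (sum_extend_emb e (fun i => w i • z i)).trans hwz
    · rintro y ⟨⟨w, z⟩, ⟨⟨hw0, hw1⟩, hz⟩, rfl⟩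
      exact (convex_convexHull ℝ s).sum_mem (fun j _ => hw0 j) hw1
        (fun j _ => subset_convexHull ℝ s (hz j trivial))
  rw [himage]
  exact (((isCompact_stdSimplex ℝ (Fin (d+1))).prod (isCompact_univ_pi fun _ => hs))).image hΦ

/-- The monomial function on the sphere. -/
def mono {n : ℕ} (α : Fin n →₀ ℕ) (x : Sph n) : ℝ :=
  ∏ i, ((x : EuclideanSpace ℝ (Fin n)) i) ^ (α i)

lemma mono_continuous {n : ℕ} (α : Fin n →₀ ℕ) : Continuous (mono α) :=
  continuous_finset_prod _ fun i _ =>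
    (((EuclideanSpace.proj i).continuous).comp continuous_subtype_val).pow _

lemma sum_sq_eq_one {n : ℕ} (x : Sph n) :
    ∑ i, ((x : EuclideanSpace ℝ (Fin n)) i) ^ 2 = 1 := by
  have hx : ‖(x : EuclideanSpace ℝ (Fin n))‖ = 1 := mem_sphere_zero_iff_norm.mp x.2
  rw [EuclideanSpace.norm_eq] at hx
  have h2 : ∑ i, ‖(x : EuclideanSpace ℝ (Fin n)) i‖ ^ 2 = 1 := by
    have := congrArg (· ^ 2) hx
    simpa [Real.sq_sqrt (Finset.sum_nonneg fun i _ => sq_nonneg _)] using this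
  simpa [Real.norm_eq_abs, sq_abs] using h2

lemma mono_add {n : ℕ} (α β : Fin n →₀ ℕ) (x : Sph n) :
    mono (α + β) x = mono α x * mono β x := by
  simp [mono, pow_add, Finset.prod_mul_distrib]

lemma mono_single {n : ℕ} (i : Fin n) (c : ℕ) (x : Sph n) :
    mono (Finsupp.single i c) x = ((x : EuclideanSpace ℝ (Fin n)) i) ^ c := by
  rw [mono, Finset.prod_eq_single i (fun j _ hj => by
    rw [Finsupp.single_apply, if_neg (by exact fun h => hj h.symm), pow_zero])
    (fun h => absurd (Finset.mem_univ i) h)]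
  rw [Finsupp.single_apply, if_pos rfl]

/-- Exponents of degree at most `t` whose `ℓ`-th entry is at most 1. -/
def expSet (n t : ℕ) (ℓ : Fin n) : Finset (Fin n →₀ ℕ) :=
  (Finset.Iic (Finsupp.equivFunOnFinite.symm fun i : Fin n => if i = ℓ then 1 else t)).filter
    (fun α => (∑ i, α i) ≤ t)

lemma mem_expSet {n t : ℕ} {ℓ : Fin n} {α : Fin n →₀ ℕ} (hdeg : (∑ i, α i) ≤ t)
    (hℓ : α ℓ ≤ 1) : α ∈ expSet n t ℓ := by
  classical
  refine Finset.mem_filter.mpr ⟨Finset.mem_Iic.mpr ?_, hdeg⟩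
  intro i
  simp only [Finsupp.equivFunOnFinite_symm_apply_apply]
  by_cases h : i = ℓ
  · subst h; simpa using hℓ
  · rw [if_neg h]
    calc α i ≤ ∑ j, α j := Finset.single_le_sum (fun j _ => Nat.zero_le _) (Finset.mem_univ i)
    _ ≤ t := hdeg

lemma card_expSet_le (n t : ℕ) (ℓ : Fin n) (hn : 1 ≤ n) :
    (expSet n t ℓ).card ≤ 2 * (t + 1) ^ (n - 1) := by
  classical
  set T : Fin n →₀ ℕ := Finsupp.equivFunOnFinite.symm fun i : Fin n => if i = ℓ then 1 else t
  have h1 : (expSet n t ℓ).card ≤ (Finset.Iic T).card :=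
    Finset.card_le_card (Finset.filter_subset _ _)
  refine h1.trans ?_
  rw [Finsupp.card_Iic]
  have h2 : ∏ i ∈ T.support, (Finset.Iic (T i)).card = ∏ i : Fin n, (T i + 1) := by
    rw [Finset.prod_subset (Finset.subset_univ T.support)
      (fun i _ hi => by
        rw [Finsupp.notMem_support_iff.mp hi]
        simp)]
    exact Finset.prod_congr rfl fun i _ => by rw [Nat.card_Iic]
  rw [h2, ← Finset.mul_prod_erase Finset.univ _ (Finset.mem_univ ℓ)]
  have hTℓ : T ℓ = 1 := by simp [T]
  have hTi : ∀ i ∈ Finset.univ.erase ℓ, T i + 1 = t + 1 := fun i hi => by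
    simp [T, Finset.ne_of_mem_erase hi]
  rw [hTℓ, Finset.prod_congr rfl hTi, Finset.prod_const]
  have : (Finset.univ.erase ℓ).card = n - 1 := by
    rw [Finset.card_erase_of_mem (Finset.mem_univ ℓ), Finset.card_univ, Fintype.card_fin]
  rw [this]

lemma sum_apply_add {n : ℕ} (γ δ : Fin n →₀ ℕ) :
    ∑ j, (γ + δ) j = (∑ j, γ j) + (∑ j, δ j) := by
  simp only [Finsupp.add_apply]
  exact Finset.sum_add_distrib

lemma sum_apply_single {n : ℕ} (i : Fin n) (c : ℕ) :
    ∑ j, (Finsupp.single i c) j = c := by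
  simp [Finsupp.single_apply]

lemma mono_mem_span {n t : ℕ} (ℓ : Fin n) :
    ∀ α : Fin n →₀ ℕ, (∑ i, α i) ≤ t →
      mono α ∈ Submodule.span ℝ
        (Set.range fun β : {α : Fin n →₀ ℕ // α ∈ expSet n t ℓ} => mono ↑β) := by
  classical
  suffices H : ∀ k, ∀ α : Fin n →₀ ℕ, α ℓ ≤ k → (∑ i, α i) ≤ t →
      mono α ∈ Submodule.span ℝ
        (Set.range fun β : {α : Fin n →₀ ℕ // α ∈ expSet n t ℓ} => mono ↑β) by
    exact fun α hα => H (α ℓ) α le_rfl hα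
  intro k
  induction k using Nat.strong_induction_on with
  | _ k ih =>
    intro α hk hdeg
    by_cases h1 : α ℓ ≤ 1
    · exact Submodule.subset_span ⟨⟨α, mem_expSet hdeg h1⟩, rfl⟩
    · push_neg at h1
      have h2 : 2 ≤ α ℓ := h1
      set β : Fin n →₀ ℕ := α - Finsupp.single ℓ 2 with hβ
      have hle : Finsupp.single ℓ 2 ≤ α := by
        rw [Finsupp.single_le_iff]; exact h2
      have hβadd : β + Finsupp.single ℓ 2 = α := tsub_add_cancel_of_le hle
      have hβℓ : β ℓ = α ℓ - 2 := by
        rw [hβ, Finsupp.tsub_apply, Finsupp.single_apply, if_pos rfl]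
      have hβi : ∀ i, i ≠ ℓ → β i = α i := fun i hi => by
        rw [hβ, Finsupp.tsub_apply, Finsupp.single_apply, if_neg (fun h => hi h.symm), Nat.sub_zero]
      have hβdeg : (∑ i, β i) + 2 = ∑ i, α i := by
        have hsum := sum_apply_add β (Finsupp.single ℓ 2)
        rw [hβadd, sum_apply_single] at hsum
        omega
      -- the key pointwise identity
      have key : mono α = mono β - ∑ i ∈ Finset.univ.erase ℓ, mono (β + Finsupp.single i 2) := by
        funext x
        have hsq : ((x : EuclideanSpace ℝ (Fin n)) ℓ) ^ 2
            = 1 - ∑ i ∈ Finset.univ.erase ℓ, ((x : EuclideanSpace ℝ (Fin n)) i) ^ 2 := by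
          have := sum_sq_eq_one x
          rw [← Finset.add_sum_erase Finset.univ _ (Finset.mem_univ ℓ)] at this
          linarith
        have hα : mono α x = mono β x * ((x : EuclideanSpace ℝ (Fin n)) ℓ) ^ 2 := by
          rw [← hβadd, mono_add, mono_single]
        rw [Pi.sub_apply, Finset.sum_apply, hα, hsq]
        rw [mul_sub, mul_one, Finset.mul_sum]
        congr 1
        refine Finset.sum_congr rfl fun i _ => ?_
        rw [mono_add, mono_single]
      rw [key]
      have hℓlt : α ℓ - 2 < k := by omega
      refine sub_mem (ih (α ℓ - 2) hℓlt β (le_of_eq hβℓ) (by omega)) ?_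
      refine Submodule.sum_mem _ fun i hi => ?_
      refine ih (α ℓ - 2) hℓlt (β + Finsupp.single i 2) ?_ ?_
      · rw [Finsupp.add_apply, Finsupp.single_apply,
          if_neg (fun h => (Finset.ne_of_mem_erase hi) h), hβℓ]
        omega
      · have hsum := sum_apply_add β (Finsupp.single i 2)
        rw [sum_apply_single] at hsum
        omega

lemma polyEval_mem_span {n t : ℕ} (ℓ : Fin n) (p : MvPolynomial (Fin n) ℝ)
    (hp : p.totalDegree ≤ t) :
    polyEval p ∈ Submodule.span ℝ
      (Set.range fun β : {α : Fin n →₀ ℕ // α ∈ expSet n t ℓ} => mono ↑β) := by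
  classical
  have hrep : polyEval p = ∑ α ∈ p.support, (MvPolynomial.coeff α p) • mono α := by
    funext x
    rw [Finset.sum_apply]
    simp only [Pi.smul_apply, smul_eq_mul]
    exact MvPolynomial.eval_eq' _ p
  rw [hrep]
  refine Submodule.sum_mem _ fun α hα => Submodule.smul_mem _ _ ?_
  refine mono_mem_span ℓ α ?_
  have h1 : (α.sum fun _ e => e) ≤ p.totalDegree := MvPolynomial.le_totalDegree hα
  have h2 : (α.sum fun _ e => e) = ∑ i, α i := by
    rw [Finsupp.sum_fintype]
    intro i; rfl
  omega

lemma continuous_polyEval {n : ℕ} (p : MvPolynomial (Fin n) ℝ) : Continuous (polyEval p) := by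
  have : polyEval p = (fun v : Fin n → ℝ => MvPolynomial.eval v p) ∘
      (fun x : Sph n => fun i => (x : EuclideanSpace ℝ (Fin n)) i) := rfl
  rw [this]
  have hc : Continuous (fun x : Sph n => fun i => (x : EuclideanSpace ℝ (Fin n)) i) :=
    continuous_pi fun i =>
      ((EuclideanSpace.proj i).continuous).comp continuous_subtype_val
  exact (MvPolynomial.continuous_eval p).comp hc

lemma cont_integrable {X E : Type*} [MeasurableSpace X] [TopologicalSpace X]
    [OpensMeasurableSpace X] [CompactSpace X] [T2Space X] [NormedAddCommGroup E]
    {f : X → E} (hf : Continuous f) (μ : Measure X) [IsFiniteMeasure μ] :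
    Integrable f μ := by
  refine hf.integrable_of_hasCompactSupport ?_
  exact IsCompact.of_isClosed_subset isCompact_univ (isClosed_tsupport f) (Set.subset_univ _)

set_option maxHeartbeats 2000000 in
theorem main (n : ℕ) (hn : 2 ≤ n)
    (σ : Measure (Sph n)) [IsProbabilityMeasure σ] :
    ∀ t : ℕ, 1 ≤ t → ∀ θ : ℝ, θ ∈ Set.Ioo (0 : ℝ) 1 →
      ∃ ν : Measure (Sph n), (IsProbabilityMeasure ν ∧
        (∃ s : Finset (Sph n), ν ((↑s : Set (Sph n))ᶜ) = 0) ∧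
        ∀ p : MvPolynomial (Fin n) ℝ, p.totalDegree ≤ t →
          ∫ x, polyEval p x ∂ν = ∫ x, polyEval p x ∂σ) ∧
        (∑' u : Sph n, (ν {u}).toReal ^ θ) ≤ ((2:ℝ)^(n+1) * (t : ℝ) ^ (n - 1)) ^ (1 - θ) := by
  classical
  intro t ht θ hθ
  obtain ⟨hθ0, hθ1⟩ := hθ
  set ℓ : Fin n := ⟨n-1, by omega⟩
  set F : Sph n → ({α : Fin n →₀ ℕ // α ∈ expSet n t ℓ} → ℝ) := fun x β => mono (↑β) x with hF
  have hFc : Continuous F := continuous_pi fun β => mono_continuous _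
  have hFi : Integrable F σ := cont_integrable hFc σ
  set y := ∫ x, F x ∂σ with hy
  have hymem : y ∈ convexHull ℝ (Set.range F) := by
    refine (convex_convexHull ℝ _).integral_mem
      (isCompact_convexHull' (isCompact_range hFc)).isClosed ?_ hFi
    exact Filter.Eventually.of_forall fun x => subset_convexHull ℝ _ (Set.mem_range_self x)
  obtain ⟨ι, hι, z, w, hzs, hzind, hwpos, hw1, hwz⟩ := eq_pos_convex_span_of_mem_convexHull hymem
  letI := hι
  have hz' : ∀ i, ∃ x, F x = z i := fun i => hzs (Set.mem_range_self i)
  choose ξ hξ using hz'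
  have hξinj : Function.Injective ξ := fun i j hij =>
    hzind.injective (by rw [← hξ i, ← hξ j, hij])
  -- the cubature measure
  set ν : Measure (Sph n) := ∑ i : ι, (ENNReal.ofReal (w i)) • Measure.dirac (ξ i) with hν
  have hνapp : ∀ s : Set (Sph n),
      ν s = ∑ i : ι, ENNReal.ofReal (w i) * (Measure.dirac (ξ i)) s := by
    intro s
    rw [hν, Measure.finset_sum_apply]
    exact Finset.sum_congr rfl fun i _ => rfl
  have hνuniv : ν Set.univ = 1 := by
    rw [hνapp]
    simp only [measure_univ, mul_one]
    rw [← ENNReal.ofReal_sum_of_nonneg (fun i _ => (hwpos i).le), hw1, ENNReal.ofReal_one]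
  haveI hνprob : IsProbabilityMeasure ν := ⟨hνuniv⟩
  -- integral against ν
  have hint : ∀ g : Sph n → ℝ, Continuous g → ∫ x, g x ∂ν = ∑ i : ι, w i * g (ξ i) := by
    intro g hg
    rw [hν, integral_finset_sum_measure (fun i _ =>
      (cont_integrable hg (Measure.dirac (ξ i))).smul_measure ENNReal.ofReal_ne_top)]
    refine Finset.sum_congr rfl fun i _ => ?_
    rw [integral_smul_measure, integral_dirac, ENNReal.toReal_ofReal (hwpos i).le, smul_eq_mul]
  -- coordinates of y
  have hyβ : ∀ β : {α : Fin n →₀ ℕ // α ∈ expSet n t ℓ}, ∫ x, mono (↑β) x ∂σ = y β := by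
    intro β
    have h := (ContinuousLinearMap.proj (R := ℝ) (φ := fun _ : {α : Fin n →₀ ℕ // α ∈ expSet n t ℓ} => ℝ) β).integral_comp_comm hFi
    simpa [hy] using h
  have hyβ' : ∀ β : {α : Fin n →₀ ℕ // α ∈ expSet n t ℓ}, y β = ∑ i : ι, w i * z i β := by
    intro β
    have h := congrFun hwz β
    rw [Finset.sum_apply] at h
    simp only [Pi.smul_apply, smul_eq_mul] at h
    exact h.symm
  -- cubature property
  have hcub : ∀ p : MvPolynomial (Fin n) ℝ, p.totalDegree ≤ t →
      ∫ x, polyEval p x ∂ν = ∫ x, polyEval p x ∂σ := by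
    intro p hp
    have hmem := polyEval_mem_span ℓ p hp
    obtain ⟨c, hc⟩ := (Submodule.mem_span_range_iff_exists_fun ℝ).mp hmem
    have hcx : ∀ x : Sph n, polyEval p x = ∑ β : {α : Fin n →₀ ℕ // α ∈ expSet n t ℓ}, c β * mono (↑β) x := by
      intro x
      have h := congrFun hc x
      rw [Finset.sum_apply] at h
      simp only [Pi.smul_apply, smul_eq_mul] at h
      exact h.symm
    have hLHS : ∫ x, polyEval p x ∂ν = ∑ β : {α : Fin n →₀ ℕ // α ∈ expSet n t ℓ}, c β * y β := by
      rw [hint (polyEval p) (continuous_polyEval p)]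
      have : ∀ i : ι, w i * polyEval p (ξ i) = ∑ β : {α : Fin n →₀ ℕ // α ∈ expSet n t ℓ}, c β * (w i * z i β) := by
        intro i
        rw [hcx (ξ i), Finset.mul_sum]
        refine Finset.sum_congr rfl fun β _ => ?_
        have : mono (↑β) (ξ i) = z i β := by rw [← hξ i]
        rw [this]; ring
      rw [Finset.sum_congr rfl fun i _ => this i, Finset.sum_comm]
      refine Finset.sum_congr rfl fun β _ => ?_
      rw [hyβ' β, Finset.mul_sum]
    have hRHS : ∫ x, polyEval p x ∂σ = ∑ β : {α : Fin n →₀ ℕ // α ∈ expSet n t ℓ}, c β * y β := by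
      have h1 : ∫ x, polyEval p x ∂σ = ∫ x, (∑ β : {α : Fin n →₀ ℕ // α ∈ expSet n t ℓ}, c β * mono (↑β) x) ∂σ :=
        integral_congr_ae (Filter.Eventually.of_forall fun x => hcx x)
      have hintsum := integral_finset_sum (μ := σ) Finset.univ
        (f := fun (β : {α : Fin n →₀ ℕ // α ∈ expSet n t ℓ}) (x : Sph n) => c β * mono (↑β) x)
        (fun β _ => cont_integrable (continuous_const.mul (mono_continuous (↑β))) σ)
      rw [h1, hintsum]
      refine Finset.sum_congr rfl fun β _ => ?_
      rw [integral_const_mul, hyβ β]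
    rw [hLHS, hRHS]
  -- atoms of ν
  have hνsingle : ∀ i : ι, ν {ξ i} = ENNReal.ofReal (w i) := by
    intro i
    rw [hνapp]
    rw [Finset.sum_eq_single i (fun j _ hji => by
        have hne : ξ j ∉ ({ξ i} : Set (Sph n)) := by
          simp only [Set.mem_singleton_iff]
          exact fun h => hji (hξinj h)
        rw [Measure.dirac_apply, Set.indicator_of_notMem hne, mul_zero])
      (fun h => absurd (Finset.mem_univ i) h)]
    rw [Measure.dirac_apply_of_mem (Set.mem_singleton _), mul_one]
  have hν0 : ∀ u : Sph n, u ∉ Finset.image ξ Finset.univ → ν {u} = 0 := by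
    intro u hu
    rw [hνapp]
    refine Finset.sum_eq_zero fun i _ => ?_
    have hne : ξ i ∉ ({u} : Set (Sph n)) := by
      simp only [Set.mem_singleton_iff]
      exact fun h => hu (h ▸ Finset.mem_image_of_mem _ (Finset.mem_univ i))
    rw [Measure.dirac_apply, Set.indicator_of_notMem hne, mul_zero]
  -- theta norm computation
  have hthetaval : (∑' u : Sph n, (ν {u}).toReal ^ θ) = ∑ i : ι, (w i) ^ θ := by
    rw [tsum_eq_sum (s := Finset.image ξ Finset.univ) (fun u hu => by
      rw [hν0 u hu, ENNReal.toReal_zero, Real.zero_rpow (ne_of_gt hθ0)])]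
    rw [Finset.sum_image (fun a _ b _ hab => hξinj hab)]
    exact Finset.sum_congr rfl fun i _ => by
      rw [hνsingle i, ENNReal.toReal_ofReal (hwpos i).le]
  -- cardinality bound
  have hne : Nonempty ι := by
    by_contra h
    rw [not_nonempty_iff] at h
    rw [Finset.univ_eq_empty, Finset.sum_empty] at hw1
    exact zero_ne_one hw1
  set N := Fintype.card ι with h';
  have hN1 : 1 ≤ N := Fintype.card_pos
  have hNcard : N ≤ (expSet n t ℓ).card + 1 := by
    refine hzind.card_le_finrank_succ.trans (Nat.add_le_add_right ?_ 1)
    refine (Submodule.finrank_le _).trans ?_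
    rw [Module.finrank_pi, Fintype.card_coe]
  have hNnat : N ≤ 2^(n+1) * t^(n-1) := by
    have hcard := card_expSet_le n t ℓ (by omega)
    have h1 : (t+1)^(n-1) ≤ 2^(n-1) * t^(n-1) := by
      calc (t+1)^(n-1) ≤ (2*t)^(n-1) := Nat.pow_le_pow_left (by omega) _
      _ = 2^(n-1) * t^(n-1) := Nat.mul_pow 2 t _
    have h2 : 1 ≤ t^(n-1) := Nat.one_le_pow _ _ (by omega)
    have h3 : 2^(n+1) = 4 * 2^(n-1) := by
      have : n + 1 = (n-1) + 2 := by omega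
      rw [this, pow_add]
      ring
    calc N ≤ (expSet n t ℓ).card + 1 := hNcard
    _ ≤ 2 * (t+1)^(n-1) + 1 := by omega
    _ ≤ 2 * (2^(n-1) * t^(n-1)) + t^(n-1) := by
        have := Nat.mul_le_mul_left 2 h1
        omega
    _ ≤ 4 * 2^(n-1) * t^(n-1) := by nlinarith [Nat.one_le_two_pow (n := n-1)]
    _ = 2^(n+1) * t^(n-1) := by rw [h3]
  -- mean inequality
  have hNpos : (0:ℝ) < N := by
    have : (0:ℕ) < N := Fintype.card_pos
    exact_mod_cast this
  have hmean : ∑ i : ι, (w i) ^ θ ≤ (N : ℝ) ^ (1 - θ) := by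
    have hp1 : (1:ℝ) ≤ 1/θ := by
      rw [le_div_iff₀ hθ0]
      linarith
    have key := Real.arith_mean_le_rpow_mean Finset.univ (fun _ : ι => (N:ℝ)⁻¹)
      (fun i => (w i) ^ θ) (fun i _ => inv_nonneg.mpr (Nat.cast_nonneg N))
      (by rw [Finset.sum_const, Finset.card_univ, nsmul_eq_mul,
            mul_inv_cancel₀ (ne_of_gt hNpos)])
      (fun i _ => Real.rpow_nonneg (hwpos i).le θ) hp1
    have hzp : ∀ i : ι, ((w i) ^ θ) ^ (1/θ) = w i := by
      intro i
      rw [← Real.rpow_mul (hwpos i).le, mul_one_div_cancel (ne_of_gt hθ0), Real.rpow_one]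
    have hsum : ∑ i : ι, (N:ℝ)⁻¹ * ((w i)^θ)^(1/θ) = (N:ℝ)⁻¹ := by
      rw [Finset.sum_congr rfl (fun i _ => by rw [hzp i]), ← Finset.mul_sum, hw1, mul_one]
    rw [hsum, one_div_one_div] at key
    have hxform : ∑ i : ι, (w i) ^ θ = (N:ℝ) * ∑ i : ι, (N:ℝ)⁻¹ * (w i)^θ := by
      rw [← Finset.mul_sum, ← mul_assoc, mul_inv_cancel₀ (ne_of_gt hNpos), one_mul]
    rw [hxform]
    calc (N:ℝ) * ∑ i : ι, (N:ℝ)⁻¹ * (w i)^θ ≤ (N:ℝ) * ((N:ℝ)⁻¹)^θ :=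
      mul_le_mul_of_nonneg_left key (le_of_lt hNpos)
    _ = (N:ℝ) ^ (1-θ) := by
      have hinv : ((N:ℝ)⁻¹)^θ = (N:ℝ) ^ (-θ) := by
        rw [← Real.rpow_neg_one (N:ℝ), ← Real.rpow_mul hNpos.le, neg_one_mul]
      rw [hinv]
      calc (N:ℝ) * (N:ℝ)^(-θ) = (N:ℝ)^(1:ℝ) * (N:ℝ)^(-θ) := by rw [Real.rpow_one]
      _ = (N:ℝ)^(1 + -θ) := (Real.rpow_add hNpos 1 (-θ)).symm
      _ = (N:ℝ)^(1-θ) := by rw [sub_eq_add_neg]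
  refine ⟨ν, ⟨hνprob, ⟨Finset.image ξ Finset.univ, ?_⟩, hcub⟩, ?_⟩
  · rw [hνapp]
    refine Finset.sum_eq_zero fun i _ => ?_
    have hmem : ξ i ∈ ((Finset.image ξ Finset.univ : Finset (Sph n)) : Set (Sph n)) := by
      simp
    rw [Measure.dirac_apply, Set.indicator_of_notMem (Set.notMem_compl_iff.mpr hmem), mul_zero]
  · rw [hthetaval]
    refine hmean.trans (Real.rpow_le_rpow (Nat.cast_nonneg N) ?_ (by linarith))
    calc (N:ℝ) ≤ ((2^(n+1) * t^(n-1) : ℕ):ℝ) := by exact_mod_cast hNnat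
    _ = (2:ℝ)^(n+1) * (t:ℝ)^(n-1) := by push_cast; ring

theorem stmt12 (n : ℕ) (hn : 2 ≤ n)
    (σ : Measure (Sph n)) [IsProbabilityMeasure σ] (hσ : IsRotationInvariant σ) :
    ∃ C : ℝ, 0 < C ∧ ∀ t : ℕ, 1 ≤ t → ∀ θ : ℝ, θ ∈ Set.Ioo (0 : ℝ) 1 →
      ∃ ν : Measure (Sph n), IsCubature t σ ν ∧
        thetaNorm ν θ ≤ (C * (t : ℝ) ^ (n - 1)) ^ (1 - θ) := by
  refine ⟨(2:ℝ)^(n+1), by positivity, ?_⟩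
  intro t ht θ hθ
  obtain ⟨ν, h1, h2⟩ := main n hn σ t ht θ hθ
  exact ⟨ν, ⟨h1.1, h1.2.1, h1.2.2⟩, h2⟩
end
end

section
/- For every integer t ≥ 1 there exists a constant C > 0 such that for every integer n ≥ 2 and every θ ∈ (0,1) there exists a cubature formula ν of strength t on S^{n-1} with ‖ν‖_θ ≤ (C·n^{2⌊t/2⌋})^{1−θ}. -/
open MeasureTheory Metric
open scoped ENNReal

noncomputable section

namespace Stmt13Aux

variable {n : ℕ}

/-- The monomial function on the sphere. -/
def mono (m : Fin n →₀ ℕ) (x : Sph n) : ℝ :=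
  ∏ i, ((x : EuclideanSpace ℝ (Fin n)) i) ^ (m i)

/-- The even part of the monomial function. -/
def psi (m : Fin n →₀ ℕ) (x : Sph n) : ℝ := (mono m x + mono m (antipode x)) / 2

lemma coord_continuous (i : Fin n) :
    Continuous (fun x : Sph n => (x : EuclideanSpace ℝ (Fin n)) i) :=
  (continuous_apply i).comp ((PiLp.continuous_ofLp ..).comp continuous_subtype_val)

lemma antipode_continuous : Continuous (antipode (n := n)) :=
  (continuous_subtype_val.neg).subtype_mk _

lemma mono_continuous (m : Fin n →₀ ℕ) : Continuous (mono m) :=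
  continuous_finset_prod _ fun i _ => (coord_continuous i).pow _

lemma psi_continuous (m : Fin n →₀ ℕ) : Continuous (psi m) :=
  (((mono_continuous m).add ((mono_continuous m).comp antipode_continuous)).div_const 2)

lemma mono_antipode (m : Fin n →₀ ℕ) (x : Sph n) :
    mono m (antipode x) = (-1 : ℝ) ^ (∑ i, m i) * mono m x := by
  unfold mono
  have hcoe : ∀ i, ((antipode x : Sph n) : EuclideanSpace ℝ (Fin n)) i
      = -((x : EuclideanSpace ℝ (Fin n)) i) := fun i => rfl
  calc (∏ i, ((antipode x : Sph n) : EuclideanSpace ℝ (Fin n)) i ^ (m i))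
      = ∏ i, ((-1 : ℝ) ^ (m i) * ((x : EuclideanSpace ℝ (Fin n)) i) ^ (m i)) := by
        refine Finset.prod_congr rfl fun i _ => ?_
        rw [hcoe i, neg_eq_neg_one_mul, mul_pow]
    _ = (-1 : ℝ) ^ (∑ i, m i) * ∏ i, ((x : EuclideanSpace ℝ (Fin n)) i) ^ (m i) := by
        rw [Finset.prod_mul_distrib, Finset.prod_pow_eq_pow_sum]

lemma psi_eq_zero_of_odd {m : Fin n →₀ ℕ} (hm : Odd (∑ i, m i)) (x : Sph n) :
    psi m x = 0 := by
  unfold psi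
  rw [mono_antipode, hm.neg_one_pow]
  ring

lemma polyEval_eq (p : MvPolynomial (Fin n) ℝ) (x : Sph n) :
    polyEval p x = ∑ m ∈ p.support, MvPolynomial.coeff m p * mono m x := by
  unfold polyEval mono
  rw [MvPolynomial.eval_eq']

lemma polyEval_continuous (p : MvPolynomial (Fin n) ℝ) : Continuous (polyEval p) := by
  have : polyEval p = fun x => ∑ m ∈ p.support, MvPolynomial.coeff m p * mono m x :=
    funext fun x => polyEval_eq p x
  rw [this]
  exact continuous_finset_sum _ fun m _ => continuous_const.mul (mono_continuous m)

/-- Even part of the evaluation as a sum of `psi`. -/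
lemma polyEval_even_part (p : MvPolynomial (Fin n) ℝ) (x : Sph n) :
    (polyEval p x + polyEval p (antipode x)) / 2 =
      ∑ m ∈ p.support, MvPolynomial.coeff m p * psi m x := by
  rw [polyEval_eq p x, polyEval_eq p (antipode x), ← Finset.sum_add_distrib,
    Finset.sum_div]
  refine Finset.sum_congr rfl fun m _ => ?_
  unfold psi
  ring

/-- The index finset of monomials of total degree at most `D`. -/
def monIdx (n D : ℕ) : Finset (Fin n →₀ ℕ) := by
  classical
  exact Finset.image
    (fun s : Sym (Option (Fin n)) D =>
      Finsupp.equivFunOnFinite.symm (fun a => Multiset.count (some a) (s : Multiset (Option (Fin n)))))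
    Finset.univ

lemma monIdx_card (n D : ℕ) : (monIdx n D).card ≤ (n + D) ^ D := by
  classical
  calc (monIdx n D).card ≤ (Finset.univ : Finset (Sym (Option (Fin n)) D)).card :=
        Finset.card_image_le
    _ = Fintype.card (Sym (Option (Fin n)) D) := Finset.card_univ
    _ = Nat.multichoose (Fintype.card (Option (Fin n))) D := Sym.card_sym_eq_multichoose _ _
    _ = Nat.multichoose (n + 1) D := by rw [Fintype.card_option, Fintype.card_fin]
    _ = (n + 1 + D - 1).choose D := Nat.multichoose_eq _ _
    _ = (n + D).choose D := by congr 1; omega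
    _ ≤ (n + D) ^ D := Nat.choose_le_pow _ _

lemma mem_monIdx {D : ℕ} {m : Fin n →₀ ℕ} (hm : (∑ i, m i) ≤ D) : m ∈ monIdx n D := by
  classical
  unfold monIdx
  rw [Finset.mem_image]
  have hcard : Multiset.card (Multiset.map some (Finsupp.toMultiset m)
      + Multiset.replicate (D - ∑ i, m i) (none : Option (Fin n))) = D := by
    rw [Multiset.card_add, Multiset.card_map, Multiset.card_replicate]
    have : Multiset.card (Finsupp.toMultiset m) = ∑ i, m i := by
      rw [Finsupp.card_toMultiset]
      exact Finsupp.sum_fintype _ _ fun _ => rfl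
    omega
  refine ⟨⟨_, hcard⟩, Finset.mem_univ _, ?_⟩
  ext a
  show Multiset.count (some a) (Multiset.map some (Finsupp.toMultiset m)
      + Multiset.replicate (D - ∑ i, m i) (none : Option (Fin n))) = m a
  rw [Multiset.count_add, Multiset.count_map_eq_count' some _ (Option.some_injective _),
    Multiset.count_replicate, if_neg (by simp), Finsupp.count_toMultiset, add_zero]

/-- The crucial decomposition: for a polynomial of degree at most `D+1` with `D` even,
the even part of its evaluation is a combination of the `psi m`, `m ∈ monIdx n D`. -/
lemma polyEval_even_part_monIdx {D : ℕ} (hD : Even D) {p : MvPolynomial (Fin n) ℝ}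
    (hp : p.totalDegree ≤ D + 1) (x : Sph n) :
    (polyEval p x + polyEval p (antipode x)) / 2 =
      ∑ m ∈ monIdx n D, MvPolynomial.coeff m p * psi m x := by
  classical
  rw [polyEval_even_part]
  have hdg : ∀ m : Fin n →₀ ℕ, (m.sum fun _ e => e) = ∑ i, m i := fun m =>
    Finsupp.sum_fintype _ _ fun _ => rfl
  -- both sums equal the sum over `p.support ∩ monIdx n D`
  rw [← Finset.sum_inter_add_sum_sdiff p.support (monIdx n D)
    (fun m => MvPolynomial.coeff m p * psi m x),
    ← Finset.sum_inter_add_sum_sdiff (monIdx n D) p.support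
    (fun m => MvPolynomial.coeff m p * psi m x)]
  have h1 : ∑ m ∈ p.support \ monIdx n D, MvPolynomial.coeff m p * psi m x = 0 := by
    refine Finset.sum_eq_zero fun m hm => ?_
    rw [Finset.mem_sdiff] at hm
    obtain ⟨hms, hmn⟩ := hm
    have hle : (∑ i, m i) ≤ D + 1 := by
      rw [← hdg m]; exact (MvPolynomial.le_totalDegree hms).trans hp
    have hgt : ¬ (∑ i, m i) ≤ D := fun h => hmn (mem_monIdx h)
    have hodd : Odd (∑ i, m i) := by
      have : (∑ i, m i) = D + 1 := by omega
      rw [this]; exact hD.add_one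
    rw [psi_eq_zero_of_odd hodd, mul_zero]
  have h2 : ∑ m ∈ monIdx n D \ p.support, MvPolynomial.coeff m p * psi m x = 0 := by
    refine Finset.sum_eq_zero fun m hm => ?_
    rw [Finset.mem_sdiff] at hm
    rw [MvPolynomial.notMem_support_iff.mp hm.2, zero_mul]
  rw [h1, h2, add_zero, add_zero, Finset.inter_comm]

end Stmt13Aux

/-- Power-mean inequality: for nonnegative reals summing to at most 1,
`∑ aᵢ^θ ≤ N^(1-θ)`. -/
lemma sum_pow_theta_le {ι : Type*} (s : Finset ι) (a : ι → ℝ)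
    (ha : ∀ i ∈ s, 0 ≤ a i) (hsum : ∑ i ∈ s, a i ≤ 1) {θ : ℝ}
    (hθ0 : 0 < θ) (hθ1 : θ < 1) :
    ∑ i ∈ s, a i ^ θ ≤ (s.card : ℝ) ^ (1 - θ) := by
  rcases s.eq_empty_or_nonempty with rfl | hne
  · simp [Real.rpow_nonneg]
  have hN : (0 : ℝ) < s.card := by exact_mod_cast hne.card_pos
  set N : ℝ := (s.card : ℝ) with hNdef
  have hkey : ∀ i ∈ s, a i ^ θ * (1 / N) ^ (1 - θ) ≤ θ * a i + (1 - θ) * (1 / N) := by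
    intro i hi
    exact Real.geom_mean_le_arith_mean2_weighted hθ0.le (by linarith) (ha i hi)
      (by positivity) (by ring)
  have hc : (1 / N) ^ (1 - θ) * N ^ (1 - θ) = 1 := by
    rw [← Real.mul_rpow (by positivity) hN.le]
    rw [one_div_mul_cancel hN.ne', Real.one_rpow]
  calc ∑ i ∈ s, a i ^ θ
      = (∑ i ∈ s, a i ^ θ * (1 / N) ^ (1 - θ)) * N ^ (1 - θ) := by
        rw [Finset.sum_mul]
        refine Finset.sum_congr rfl fun i hi => ?_
        rw [mul_assoc, hc, mul_one]
    _ ≤ (θ * (∑ i ∈ s, a i) + (1 - θ)) * N ^ (1 - θ) := by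
        have h1 : ∑ i ∈ s, (θ * a i + (1 - θ) * (1 / N)) =
            θ * (∑ i ∈ s, a i) + (1 - θ) := by
          rw [Finset.sum_add_distrib, ← Finset.mul_sum, Finset.sum_const, nsmul_eq_mul]
          have : (s.card : ℝ) * ((1 - θ) * (1 / N)) = 1 - θ := by
            field_simp
            rw [hNdef]; ring
          rw [this]
        have h2 : ∑ i ∈ s, a i ^ θ * (1 / N) ^ (1 - θ) ≤
            θ * (∑ i ∈ s, a i) + (1 - θ) := by
          rw [← h1]; exact Finset.sum_le_sum hkey
        exact mul_le_mul_of_nonneg_right h2 (Real.rpow_nonneg hN.le _)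
    _ ≤ 1 * N ^ (1 - θ) := by
        refine mul_le_mul_of_nonneg_right ?_ (Real.rpow_nonneg hN.le _)
        nlinarith
    _ = N ^ (1 - θ) := one_mul _

/-- Transferring a sum over a fintype `ι` to a sum over a larger `Fin K`. -/
lemma dite_sum_transfer {M : Type*} [AddCommMonoid M] {ι : Type*} [Fintype ι]
    (K : ℕ) (hK : Fintype.card ι ≤ K) (e : ι ≃ Fin (Fintype.card ι)) (f : ι → M) :
    (∑ j : Fin K, if h : (j : ℕ) < Fintype.card ι then f (e.symm ⟨j, h⟩) else 0)
      = ∑ i, f i := by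
  have h1 : (∑ j : Fin K, (if h : (j : ℕ) < (Fintype.card ι) then f (e.symm ⟨j, h⟩) else 0)) =
      ∑ j ∈ Finset.range K, (if h : j < (Fintype.card ι) then f (e.symm ⟨j, h⟩) else 0) :=
    Fin.sum_univ_eq_sum_range (fun j => if h : j < (Fintype.card ι) then f (e.symm ⟨j, h⟩) else 0) K
  have h2 : (∑ j ∈ Finset.range (Fintype.card ι), (if h : j < (Fintype.card ι) then f (e.symm ⟨j, h⟩) else 0)) =
      ∑ j ∈ Finset.range K, (if h : j < (Fintype.card ι) then f (e.symm ⟨j, h⟩) else 0) := by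
    refine Finset.sum_subset (Finset.range_subset_range.mpr hK) ?_
    intro j _ hj
    rw [dif_neg (by simpa using hj)]
  have h3 : (∑ j : Fin (Fintype.card ι), f (e.symm j)) =
      ∑ j ∈ Finset.range (Fintype.card ι), (if h : j < (Fintype.card ι) then f (e.symm ⟨j, h⟩) else 0) := by
    rw [← Fin.sum_univ_eq_sum_range (fun j => if h : j < (Fintype.card ι) then f (e.symm ⟨j, h⟩) else 0) (Fintype.card ι)]
    refine Finset.sum_congr rfl fun j _ => ?_
    rw [dif_pos j.isLt]
  have h4 : (∑ j : Fin (Fintype.card ι), f (e.symm j)) = ∑ i, f i := Equiv.sum_comp e.symm f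
  rw [h1, ← h2, ← h3, h4]

/-- Carathéodory-type representation: any point of the convex hull of `S` is a convex
combination of `finrank + 1` points of `S`. -/
lemma exists_convex_rep {E : Type*} [NormedAddCommGroup E] [NormedSpace ℝ E]
    [FiniteDimensional ℝ E] {S : Set E} (hS : S.Nonempty) {x : E}
    (hx : x ∈ convexHull ℝ S) :
    ∃ (w : Fin (Module.finrank ℝ E + 1) → ℝ) (z : Fin (Module.finrank ℝ E + 1) → E),
      (∀ i, 0 ≤ w i) ∧ (∑ i, w i) = 1 ∧ (∀ i, z i ∈ S) ∧ ∑ i, w i • z i = x := by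
  classical
  obtain ⟨ι, hfin, z₀, w₀, hzS, hai, hwpos, hwsum, hrep⟩ :=
    eq_pos_convex_span_of_mem_convexHull hx
  set d := Module.finrank ℝ E with hd
  have hcard : Fintype.card ι ≤ d + 1 :=
    hai.card_le_finrank_succ.trans (Nat.add_le_add_right (Submodule.finrank_le _) 1)
  set N := Fintype.card ι with hN
  let e : ι ≃ Fin N := Fintype.equivFin ι
  obtain ⟨s₀, hs₀⟩ := hS
  refine ⟨fun j => if h : (j : ℕ) < N then w₀ (e.symm ⟨j, h⟩) else 0,
    fun j => if h : (j : ℕ) < N then z₀ (e.symm ⟨j, h⟩) else s₀, ?_, ?_, ?_, ?_⟩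
  · intro j
    by_cases h : (j : ℕ) < N
    · simp only [dif_pos h]; exact (hwpos _).le
    · simp only [dif_neg h]; exact le_refl 0
  · rw [dite_sum_transfer (d + 1) hcard e w₀, hwsum]
  · intro j
    by_cases h : (j : ℕ) < N
    · simp only [dif_pos h]; exact hzS (Set.mem_range_self _)
    · simp only [dif_neg h]; exact hs₀
  · have heq : ∀ j : Fin (d + 1),
        ((if h : (j : ℕ) < N then w₀ (e.symm ⟨j, h⟩) else 0) •
          (if h : (j : ℕ) < N then z₀ (e.symm ⟨j, h⟩) else s₀)) =
        (if h : (j : ℕ) < N then w₀ (e.symm ⟨j, h⟩) • z₀ (e.symm ⟨j, h⟩) else 0) := by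
      intro j
      by_cases h : (j : ℕ) < N
      · simp only [dif_pos h]
      · simp only [dif_neg h, zero_smul]
    calc (∑ j : Fin (d + 1), (if h : (j : ℕ) < N then w₀ (e.symm ⟨j, h⟩) else 0) •
          (if h : (j : ℕ) < N then z₀ (e.symm ⟨j, h⟩) else s₀))
        = ∑ j : Fin (d + 1),
            (if h : (j : ℕ) < N then w₀ (e.symm ⟨j, h⟩) • z₀ (e.symm ⟨j, h⟩) else 0) :=
          Finset.sum_congr rfl fun j _ => heq j
      _ = ∑ i, w₀ i • z₀ i := dite_sum_transfer (d + 1) hcard e fun i => w₀ i • z₀ i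
      _ = x := hrep

namespace Stmt13Aux

/-- Integrals against `σ` are invariant under the antipodal map. -/
lemma integral_antipode {n : ℕ} {σ : Measure (Sph n)} (hσinv : IsRotationInvariant σ)
    {f : Sph n → ℝ} (hf : Continuous f) :
    ∫ x, f (antipode x) ∂σ = ∫ x, f x ∂σ := by
  have hmap : sphMap (LinearIsometryEquiv.neg ℝ (E := EuclideanSpace ℝ (Fin n))) = antipode := by
    funext x
    exact Subtype.ext rfl
  have h := hσinv (LinearIsometryEquiv.neg ℝ)
  rw [hmap] at h
  calc ∫ x, f (antipode x) ∂σ = ∫ y, f y ∂(Measure.map antipode σ) :=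
        (integral_map antipode_continuous.aemeasurable hf.aestronglyMeasurable).symm
    _ = ∫ x, f x ∂σ := by rw [h]

end Stmt13Aux

open Stmt13Aux

theorem stmt13 (t : ℕ) (ht : 1 ≤ t) :
    ∃ C : ℝ, 0 < C ∧ ∀ n : ℕ, 2 ≤ n → ∀ σ : Measure (Sph n),
      IsProbabilityMeasure σ → IsRotationInvariant σ →
      ∀ θ : ℝ, θ ∈ Set.Ioo (0 : ℝ) 1 →
        ∃ ν : Measure (Sph n), IsCubature t σ ν ∧
          thetaNorm ν θ ≤ (C * (n : ℝ) ^ (2 * (t / 2))) ^ (1 - θ) := by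
  classical
  set D := 2 * (t / 2) with hDdef
  have hDeven : Even D := even_two_mul _
  have htD : t ≤ D + 1 := by omega
  refine ⟨((4 * (D + 1) ^ D : ℕ) : ℝ), by positivity, ?_⟩
  intro n hn σ hσP hσinv θ hθ
  haveI := hσP
  obtain ⟨hθ0, hθ1⟩ := hθ
  have hn1 : 0 < n := by omega
  have hsne : Nonempty (Sph n) :=
    ⟨⟨EuclideanSpace.single ⟨0, hn1⟩ (1 : ℝ), by
      rw [mem_sphere_zero_iff_norm, EuclideanSpace.norm_single]; norm_num⟩⟩
  -- the moment map
  set I : Finset (Fin n →₀ ℕ) := monIdx n D with hI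
  let E' : Type := (↥I → ℝ)
  let φ : Sph n → E' := fun x m => psi (↑m) x
  have hφcont : Continuous φ := continuous_pi fun m => psi_continuous _
  have hφint : Integrable φ σ :=
    hφcont.integrable_of_hasCompactSupport (HasCompactSupport.of_compactSpace φ)
  set S : Set E' := Set.range φ with hS
  have hScomp : IsCompact S := isCompact_range hφcont
  have hSne : S.Nonempty := Set.range_nonempty _
  set d := Module.finrank ℝ E' with hdd
  have hrank : d = I.card := by
    rw [hdd]
    rw [Module.finrank_fintype_fun_eq_card, Fintype.card_coe]
  -- the convex hull of S is closed
  let c : (Fin (d + 1) → ℝ) × (Fin (d + 1) → E') → E' := fun q => ∑ i, q.1 i • q.2 i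
  have hccont : Continuous c := continuous_finset_sum _ fun i _ =>
    ((continuous_apply i).comp continuous_fst).smul ((continuous_apply i).comp continuous_snd)
  set A : Set E' := c '' ((stdSimplex ℝ (Fin (d + 1))) ×ˢ (Set.univ.pi fun _ => S)) with hA
  have hAcomp : IsCompact A :=
    (((isCompact_stdSimplex (𝕜 := ℝ) (ι := Fin (d + 1))).prod (isCompact_univ_pi fun _ => hScomp))).image hccont
  have hAhull : A ⊆ convexHull ℝ S := by
    rintro x ⟨⟨wq, zq⟩, ⟨hwq, hzq⟩, rfl⟩
    exact (convex_convexHull ℝ S).sum_mem (fun i _ => hwq.1 i) hwq.2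
      (fun i _ => subset_convexHull ℝ S (hzq i (Set.mem_univ i)))
  have hhullA : convexHull ℝ S ⊆ A := by
    intro x hx
    obtain ⟨w', z', hw0', hw1', hzS', hrep'⟩ := exists_convex_rep hSne hx
    exact ⟨(w', z'), ⟨⟨hw0', hw1'⟩, fun i _ => hzS' i⟩, hrep'⟩
  have hhull_closed : IsClosed (convexHull ℝ S) := by
    rw [← Set.Subset.antisymm hAhull hhullA]
    exact hAcomp.isClosed
  -- the moment vector
  set b : E' := ∫ x, φ x ∂σ with hb
  have hbmem : b ∈ convexHull ℝ S :=
    (convex_convexHull ℝ S).integral_mem hhull_closed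
      (Filter.Eventually.of_forall fun x => subset_convexHull ℝ S (Set.mem_range_self x)) hφint
  have hbm : ∀ m : ↥I, b m = ∫ x, psi (↑m) x ∂σ := by
    intro m
    have := (ContinuousLinearMap.proj (R := ℝ) (φ := fun _ : ↥I => ℝ) m).integral_comp_comm hφint
    simpa using this.symm
  -- Carathéodory representation of b
  obtain ⟨w, z, hw0, hw1, hzS, hrep⟩ := exists_convex_rep hSne hbmem
  have hptex : ∀ j, ∃ x : Sph n, φ x = z j := fun j => hzS j
  choose pt hpt using hptex
  -- the cubature measure
  set ν : Measure (Sph n) := ∑ j : Fin (d + 1),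
    (ENNReal.ofReal (w j / 2)) • (Measure.dirac (pt j) + Measure.dirac (antipode (pt j)))
    with hν
  -- integration against ν
  have hint : ∀ f : Sph n → ℝ, Continuous f →
      ∫ x, f x ∂ν = ∑ j, (w j / 2) * (f (pt j) + f (antipode (pt j))) := by
    intro f hf
    have hdint : ∀ a : Sph n, Integrable f (Measure.dirac a) := fun a =>
      hf.integrable_of_hasCompactSupport (HasCompactSupport.of_compactSpace f)
    rw [hν, integral_finset_sum_measure (fun j _ =>
      (((hdint (pt j)).add_measure (hdint _))).smul_measure ENNReal.ofReal_ne_top)]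
    refine Finset.sum_congr rfl fun j _ => ?_
    rw [integral_smul_measure, integral_add_measure (hdint _) (hdint _),
      integral_dirac, integral_dirac, ENNReal.toReal_ofReal (by have := hw0 j; linarith), smul_eq_mul]
  -- ν is a probability measure
  have hof2 : ∀ j : Fin (d + 1), ENNReal.ofReal (w j / 2) * 2 = ENNReal.ofReal (w j) := by
    intro j
    rw [show (2 : ℝ≥0∞) = ENNReal.ofReal 2 by simp,
      ← ENNReal.ofReal_mul (by have := hw0 j; linarith)]
    norm_num
  have hνuniv : ν Set.univ = 1 := by
    rw [hν, Measure.finset_sum_apply]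
    have hterm : ∀ j : Fin (d + 1),
        (ENNReal.ofReal (w j / 2) • (Measure.dirac (pt j) + Measure.dirac (antipode (pt j))))
          Set.univ = ENNReal.ofReal (w j) := by
      intro j
      rw [Measure.smul_apply, Measure.add_apply, measure_univ, measure_univ, smul_eq_mul,
        one_add_one_eq_two, hof2 j]
    rw [Finset.sum_congr rfl fun j _ => hterm j,
      ← ENNReal.ofReal_sum_of_nonneg fun j _ => hw0 j, hw1, ENNReal.ofReal_one]
  haveI hνP : IsProbabilityMeasure ν := ⟨hνuniv⟩
  -- the support of ν
  set sfin : Finset (Sph n) :=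
    (Finset.univ.image pt) ∪ (Finset.univ.image fun j => antipode (pt j)) with hsfin
  have hmem1 : ∀ j, pt j ∈ sfin := fun j =>
    Finset.mem_union_left _ (Finset.mem_image_of_mem _ (Finset.mem_univ j))
  have hmem2 : ∀ j, antipode (pt j) ∈ sfin := fun j =>
    Finset.mem_union_right _ (Finset.mem_image_of_mem _ (Finset.mem_univ j))
  have hνcompl : ν ((↑sfin : Set (Sph n))ᶜ) = 0 := by
    rw [hν, Measure.finset_sum_apply]
    refine Finset.sum_eq_zero fun j _ => ?_
    rw [Measure.smul_apply, Measure.add_apply, Measure.dirac_apply, Measure.dirac_apply,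
      Set.indicator_of_notMem (by simp [hmem1 j]) _,
      Set.indicator_of_notMem (by simp [hmem2 j]) _]
    simp
  -- cubature property
  have hcub : ∀ p : MvPolynomial (Fin n) ℝ, p.totalDegree ≤ t →
      ∫ x, polyEval p x ∂ν = ∫ x, polyEval p x ∂σ := by
    intro p hp
    have hpD : p.totalDegree ≤ D + 1 := hp.trans htD
    have hpcont := polyEval_continuous p
    have hdecomp : ∀ x : Sph n,
        (polyEval p x + polyEval p (antipode x)) / 2 =
          ∑ m : ↥I, MvPolynomial.coeff (↑m) p * psi (↑m) x := by
      intro x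
      rw [polyEval_even_part_monIdx hDeven hpD x, ← hI, ← Finset.sum_coe_sort]
    rw [hint _ hpcont]
    have hstep1 : ∀ j : Fin (d + 1),
        (w j / 2) * (polyEval p (pt j) + polyEval p (antipode (pt j))) =
          w j * ∑ m : ↥I, MvPolynomial.coeff (↑m) p * psi (↑m) (pt j) := by
      intro j
      rw [← hdecomp (pt j)]
      ring
    rw [Finset.sum_congr rfl fun j _ => hstep1 j]
    have hswap : (∑ j : Fin (d + 1), w j * ∑ m : ↥I, MvPolynomial.coeff (↑m) p * psi (↑m) (pt j))
        = ∑ m : ↥I, MvPolynomial.coeff (↑m) p * ∑ j : Fin (d + 1), w j * psi (↑m) (pt j) := by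
      calc (∑ j : Fin (d + 1), w j * ∑ m : ↥I, MvPolynomial.coeff (↑m) p * psi (↑m) (pt j))
          = ∑ j : Fin (d + 1), ∑ m : ↥I, w j * (MvPolynomial.coeff (↑m) p * psi (↑m) (pt j)) :=
            Finset.sum_congr rfl fun j _ => Finset.mul_sum _ _ _
        _ = ∑ m : ↥I, ∑ j : Fin (d + 1), w j * (MvPolynomial.coeff (↑m) p * psi (↑m) (pt j)) :=
            Finset.sum_comm
        _ = ∑ m : ↥I, MvPolynomial.coeff (↑m) p * ∑ j : Fin (d + 1), w j * psi (↑m) (pt j) := by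
            refine Finset.sum_congr rfl fun m _ => ?_
            rw [Finset.mul_sum]
            exact Finset.sum_congr rfl fun j _ => by ring
    rw [hswap]
    have hinner : ∀ m : ↥I, (∑ j : Fin (d + 1), w j * psi (↑m) (pt j)) = b m := by
      intro m
      have hterm : ∀ j, w j * psi (↑m) (pt j) = (w j • z j) m := by
        intro j
        rw [← hpt j]
        rfl
      rw [Finset.sum_congr rfl fun j _ => hterm j]
      rw [← Finset.sum_apply m Finset.univ fun j => w j • z j, hrep]
    have hintψ : ∀ m : ↥I, Integrable (fun x => MvPolynomial.coeff (↑m) p * psi (↑m) x) σ :=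
      fun m => (continuous_const.mul (psi_continuous _)).integrable_of_hasCompactSupport
        (HasCompactSupport.of_compactSpace _)
    calc (∑ m : ↥I, MvPolynomial.coeff (↑m) p * ∑ j : Fin (d + 1), w j * psi (↑m) (pt j))
        = ∑ m : ↥I, MvPolynomial.coeff (↑m) p * ∫ x, psi (↑m) x ∂σ := by
          refine Finset.sum_congr rfl fun m _ => ?_
          rw [hinner m, hbm m]
      _ = ∑ m : ↥I, ∫ x, MvPolynomial.coeff (↑m) p * psi (↑m) x ∂σ := by
          refine Finset.sum_congr rfl fun m _ => ?_
          rw [integral_const_mul]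
      _ = ∫ x, ∑ m : ↥I, MvPolynomial.coeff (↑m) p * psi (↑m) x ∂σ :=
          (integral_finset_sum _ fun m _ => hintψ m).symm
      _ = ∫ x, (polyEval p x + polyEval p (antipode x)) / 2 ∂σ := by
          refine integral_congr_ae (Filter.Eventually.of_forall fun x => ?_)
          exact (hdecomp x).symm
      _ = ((∫ x, polyEval p x ∂σ) + ∫ x, polyEval p (antipode x) ∂σ) / 2 := by
          have hi1 : Integrable (fun x => polyEval p x) σ :=
            hpcont.integrable_of_hasCompactSupport (HasCompactSupport.of_compactSpace _)
          have hi2 : Integrable (fun x => polyEval p (antipode x)) σ :=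
            (hpcont.comp antipode_continuous).integrable_of_hasCompactSupport
              (HasCompactSupport.of_compactSpace _)
          rw [integral_div, integral_add hi1 hi2]
      _ = ∫ x, polyEval p x ∂σ := by
          rw [integral_antipode hσinv hpcont]
          ring
  refine ⟨ν, ⟨hνP, ⟨sfin, hνcompl⟩, hcub⟩, ?_⟩
  -- the θ-norm bound
  have hnu0 : ∀ u : Sph n, u ∉ sfin → ν {u} = 0 := by
    intro u hu
    refine measure_mono_null ?_ hνcompl
    rw [Set.singleton_subset_iff]
    simpa using hu
  have htsum : thetaNorm ν θ = ∑ u ∈ sfin, (ν {u}).toReal ^ θ := by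
    refine tsum_eq_sum fun u hu => ?_
    have h0 : ν {u} = 0 := hnu0 u hu
    simp [h0, Real.zero_rpow hθ0.ne']
  have hsum_le1 : ∑ u ∈ sfin, (ν {u}).toReal ≤ 1 := by
    have hdisj : (↑sfin : Set (Sph n)).PairwiseDisjoint (fun u => ({u} : Set (Sph n))) := by
      intro a _ b _ hab
      simp [Set.disjoint_singleton_left, hab]
    have hbiu := measure_biUnion_finset (μ := ν) hdisj fun u _ => measurableSet_singleton u
    have hcoe : (⋃ u ∈ sfin, ({u} : Set (Sph n))) = ↑sfin := by
      rw [← Finset.set_biUnion_coe, Set.biUnion_of_singleton]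
    rw [hcoe] at hbiu
    calc ∑ u ∈ sfin, (ν {u}).toReal = (∑ u ∈ sfin, ν {u}).toReal :=
          (ENNReal.toReal_sum fun u _ => measure_ne_top ν _).symm
      _ = (ν (↑sfin : Set (Sph n))).toReal := by rw [← hbiu]
      _ ≤ (1 : ℝ≥0∞).toReal := ENNReal.toReal_mono ENNReal.one_ne_top prob_le_one
      _ = 1 := ENNReal.toReal_one
  have hbound := sum_pow_theta_le sfin (fun u => (ν {u}).toReal)
    (fun u _ => ENNReal.toReal_nonneg) hsum_le1 hθ0 hθ1
  -- counting the support
  have hcount : sfin.card ≤ 4 * ((D + 1) ^ D * n ^ D) := by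
    have h1 : sfin.card ≤ (d + 1) + (d + 1) := by
      refine (Finset.card_union_le _ _).trans (add_le_add ?_ ?_) <;>
        exact Finset.card_image_le.trans (by simp [hdd])
    have h2 : I.card ≤ (n + D) ^ D := by rw [hI]; exact monIdx_card n D
    have h3 : (n + D) ^ D ≤ (D + 1) ^ D * n ^ D := by
      have hnD : n + D ≤ (D + 1) * n := by
        have : D ≤ D * n := Nat.le_mul_of_pos_right D hn1
        nlinarith
      calc (n + D) ^ D ≤ ((D + 1) * n) ^ D := Nat.pow_le_pow_left hnD D
        _ = (D + 1) ^ D * n ^ D := mul_pow _ _ _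
    have h4 : 1 ≤ (D + 1) ^ D * n ^ D := Nat.one_le_iff_ne_zero.mpr (by positivity)
    have h5 : I.card ≤ (D + 1) ^ D * n ^ D := h2.trans h3
    omega
  -- conclude
  calc thetaNorm ν θ = ∑ u ∈ sfin, (ν {u}).toReal ^ θ := htsum
    _ ≤ (sfin.card : ℝ) ^ (1 - θ) := hbound
    _ ≤ ((4 * ((D + 1) ^ D * n ^ D) : ℕ) : ℝ) ^ (1 - θ) :=
        Real.rpow_le_rpow (Nat.cast_nonneg _) (Nat.cast_le.mpr hcount) (by linarith)
    _ = (((4 * (D + 1) ^ D : ℕ) : ℝ) * (n : ℝ) ^ D) ^ (1 - θ) := by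
        congr 1
        push_cast
        ring
end
end
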